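/- arXiv:1502.01040 — 6 statements merged into one kernel-verified Lean document; each statement's English description precedes it below -/
import Mathlib

section
/- For every integer n ≥ 1, the invariant ring Rᵀ (the ℂ-subalgebra of R = ℂ[x₁, y₁, …, y_n, x_n] consisting of all polynomials each of whose monomials has ℤⁿ-weight 0) equals the ℂ-subalgebra generated by the three monomials z₁ = x_n^{n+1} ∏_{j=1}^{n} y_j^{j}, z₂ = x₁^{n+1} ∏_{j=1}^{n} y_j^{n+1−j}, and w = x₁ x_n ∏_{j=1}^{n} y_j. -/
open MvPolynomial

/-- The subalgebra of an `Fin n`-multigraded polynomial ring consisting of the polynomials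
all of whose monomials have weight zero (the ring of invariants of the torus action
with weights `w`). -/
noncomputable def invariants {m n : ℕ} (w : Fin m → Fin n → ℤ) :
    Subalgebra ℂ (MvPolynomial (Fin m) ℂ) where
  carrier := {p | ∀ d ∈ p.support, ∀ i : Fin n, ∑ v, (d v : ℤ) * w v i = 0}
  zero_mem' := by
    intro d hd i
    simp at hd
  one_mem' := by
    intro d hd i
    have hd' : d = 0 := by
      by_contra h
      have := MvPolynomial.mem_support_iff.mp hd
      rw [show (1 : MvPolynomial (Fin m) ℂ) = C 1 from (map_one C).symm,
        MvPolynomial.coeff_C, if_neg (Ne.symm h)] at this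
      exact this rfl
    subst hd'
    simp
  add_mem' := by
    intro p q hp hq d hd i
    rcases Finset.mem_union.mp (MvPolynomial.support_add hd) with h | h
    · exact hp d h i
    · exact hq d h i
  mul_mem' := by
    intro p q hp hq d hd i
    obtain ⟨a, ha, b, hb, rfl⟩ := Finset.mem_add.mp (MvPolynomial.support_mul p q hd)
    have key : ∀ v : Fin m, (((a + b) v : ℤ)) * w v i
        = (a v : ℤ) * w v i + (b v : ℤ) * w v i := by
      intro v
      rw [Finsupp.add_apply]
      push_cast
      ring
    rw [Finset.sum_congr rfl fun v _ => key v, Finset.sum_add_distrib,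
      hp a ha i, hq b hb i, add_zero]
  algebraMap_mem' := by
    intro r d hd i
    have hd' : d = 0 := by
      by_contra h
      have := MvPolynomial.mem_support_iff.mp hd
      rw [MvPolynomial.algebraMap_eq, MvPolynomial.coeff_C, if_neg (Ne.symm h)] at this
      exact this rfl
    subst hd'
    simp

/-- Weights of the torus action for the `A_n` singularity: the variables of
`ℂ[x₁, y₁, …, y_n, x_n]` are indexed by `Fin (n+2)` with `0 ↦ x₁`, `j ↦ y_j`
for `1 ≤ j ≤ n` and `n+1 ↦ x_n`; the coordinate `i : Fin n` corresponds to the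
basis vector `e_{i+1}` of `ℤⁿ`.  Thus `w(x₁) = e₁`, `w(x_n) = e_n` and
`w(y_k) = e_{k-1} - 2e_k + e_{k+1}` (with `e₀ = e_{n+1} = 0`). -/
def wA (n : ℕ) (v : Fin (n + 2)) (i : Fin n) : ℤ :=
  if (v : ℕ) = 0 then (if (i : ℕ) = 0 then 1 else 0)
  else if (v : ℕ) = n + 1 then (if (i : ℕ) = n - 1 then 1 else 0)
  else (if (i : ℕ) + 1 = (v : ℕ) - 1 then 1 else 0)
    + (if (i : ℕ) + 1 = (v : ℕ) then -2 else 0)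
    + (if (i : ℕ) + 1 = (v : ℕ) + 1 then 1 else 0)

/-- The variable of index `a` in `ℂ[x₁, y₁, …, y_n, x_n]` (indices as in `wA`). -/
noncomputable def vA (n : ℕ) (a : ℕ) : MvPolynomial (Fin (n + 2)) ℂ :=
  MvPolynomial.X ⟨a % (n + 2), Nat.mod_lt a (by omega)⟩


/-- index function -/
def fiA (n : ℕ) (a : ℕ) : Fin (n + 2) := ⟨a % (n + 2), Nat.mod_lt a (by omega)⟩

lemma wA_eq (n : ℕ) (v : Fin (n+2)) (i : Fin n) :
    wA n v i = (if (v:ℕ) = (i:ℕ) then 1 else 0) - 2*(if (v:ℕ) = (i:ℕ)+1 then 1 else 0)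
      + (if (v:ℕ) = (i:ℕ)+2 then 1 else 0) := by
  have hv := v.isLt
  have hi := i.isLt
  unfold wA
  split_ifs <;> omega

lemma fiA_eq_iff (n : ℕ) {j k : ℕ} (hj : j < n+2) (hk : k < n+2) :
    fiA n j = fiA n k ↔ j = k := by
  simp [fiA, Fin.ext_iff, Nat.mod_eq_of_lt hj, Nat.mod_eq_of_lt hk]

lemma sum_wA (n : ℕ) (d : Fin (n+2) →₀ ℕ) (i : Fin n) :
    ∑ v, (d v : ℤ) * wA n v i
      = (d (fiA n i) : ℤ) - 2 * d (fiA n ((i:ℕ)+1)) + d (fiA n ((i:ℕ)+2)) := by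
  have hi := i.isLt
  have key : ∀ (c : ℕ), c < n+2 →
      ∑ v, (d v : ℤ) * (if (v:ℕ) = c then 1 else 0) = d (fiA n c) := by
    intro c hc
    rw [Finset.sum_eq_single (fiA n c)]
    · simp [fiA, Nat.mod_eq_of_lt hc]
    · intro b _ hb
      have : (b:ℕ) ≠ c := by
        intro h
        apply hb
        have : fiA n (b:ℕ) = fiA n c := (fiA_eq_iff n b.isLt hc).mpr h
        simpa [fiA, Nat.mod_eq_of_lt b.isLt, Fin.ext_iff] using this
      simp [this]
    · simp
  calc ∑ v, (d v : ℤ) * wA n v i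
      = ∑ v, ((d v : ℤ) * (if (v:ℕ) = (i:ℕ) then 1 else 0)
          - 2*((d v : ℤ) * (if (v:ℕ) = (i:ℕ)+1 then 1 else 0))
          + (d v : ℤ) * (if (v:ℕ) = (i:ℕ)+2 then 1 else 0)) := by
        refine Finset.sum_congr rfl fun v _ => ?_
        rw [wA_eq]; ring
    _ = _ := by
        rw [Finset.sum_add_distrib, Finset.sum_sub_distrib, ← Finset.mul_sum,
          key i (by omega), key ((i:ℕ)+1) (by omega), key ((i:ℕ)+2) (by omega)]

noncomputable def Dz1 (n : ℕ) : Fin (n+2) →₀ ℕ :=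
  Finsupp.single (fiA n (n+1)) (n+1) + ∑ j ∈ Finset.Icc 1 n, Finsupp.single (fiA n j) j

noncomputable def Dz2 (n : ℕ) : Fin (n+2) →₀ ℕ :=
  Finsupp.single (fiA n 0) (n+1) + ∑ j ∈ Finset.Icc 1 n, Finsupp.single (fiA n j) (n+1-j)

noncomputable def Dw (n : ℕ) : Fin (n+2) →₀ ℕ :=
  Finsupp.single (fiA n 0) 1 + Finsupp.single (fiA n (n+1)) 1 +
    ∑ j ∈ Finset.Icc 1 n, Finsupp.single (fiA n j) 1

lemma sumSingle_apply (n : ℕ) (e : ℕ → ℕ) (k : ℕ) (hk : k < n+2) :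
    (∑ j ∈ Finset.Icc 1 n, Finsupp.single (fiA n j) (e j)) (fiA n k)
      = if 1 ≤ k ∧ k ≤ n then e k else 0 := by
  rw [Finsupp.finset_sum_apply]
  rw [Finset.sum_congr rfl (fun j hj => ?_), Finset.sum_ite_eq' (Finset.Icc 1 n) k e]
  · simp [Finset.mem_Icc]
  · have hj' : j < n + 2 := by
      have := (Finset.mem_Icc.mp hj).2; omega
    simp only [Finsupp.single_apply, fiA_eq_iff n hj' hk]

lemma Dz1_apply (n : ℕ) (k : ℕ) (hk : k < n+2) :
    Dz1 n (fiA n k) = if k = n+1 then n+1 else if 1 ≤ k ∧ k ≤ n then k else 0 := by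
  rw [Dz1, Finsupp.add_apply, sumSingle_apply n _ k hk, Finsupp.single_apply]
  simp only [fiA_eq_iff n (by omega : n+1 < n+2) hk]
  split_ifs <;> omega

lemma Dz2_apply (n : ℕ) (k : ℕ) (hk : k < n+2) :
    Dz2 n (fiA n k) = if k = 0 then n+1 else if 1 ≤ k ∧ k ≤ n then n+1-k else 0 := by
  rw [Dz2, Finsupp.add_apply, sumSingle_apply n _ k hk, Finsupp.single_apply]
  simp only [fiA_eq_iff n (by omega : 0 < n+2) hk]
  split_ifs <;> omega

lemma Dw_apply (n : ℕ) (k : ℕ) (hk : k < n+2) :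
    Dw n (fiA n k) = 1 := by
  rw [Dw, Finsupp.add_apply, Finsupp.add_apply, sumSingle_apply n _ k hk,
    Finsupp.single_apply, Finsupp.single_apply]
  simp only [fiA_eq_iff n (by omega : 0 < n+2) hk, fiA_eq_iff n (by omega : n+1 < n+2) hk]
  split_ifs <;> omega

lemma prod_X_pow_fi (n : ℕ) (s : Finset ℕ) (e : ℕ → ℕ) :
    ∏ j ∈ s, (X (fiA n j) : MvPolynomial (Fin (n+2)) ℂ) ^ e j
      = monomial (∑ j ∈ s, Finsupp.single (fiA n j) (e j)) 1 := by
  classical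
  induction s using Finset.cons_induction with
  | empty => simp
  | cons a s ha ih =>
    rw [Finset.prod_cons, Finset.sum_cons, ih, X_pow_eq_monomial, monomial_mul, one_mul]

lemma vA_eq (n a : ℕ) : vA n a = X (fiA n a) := rfl

lemma gz1_eq (n : ℕ) :
    vA n (n + 1) ^ (n + 1) * ∏ j ∈ Finset.Icc 1 n, vA n j ^ j = monomial (Dz1 n) 1 := by
  simp only [vA_eq]
  rw [prod_X_pow_fi, X_pow_eq_monomial, monomial_mul, one_mul, Dz1]

lemma gz2_eq (n : ℕ) :
    vA n 0 ^ (n + 1) * ∏ j ∈ Finset.Icc 1 n, vA n j ^ (n + 1 - j) = monomial (Dz2 n) 1 := by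
  simp only [vA_eq]
  rw [prod_X_pow_fi, X_pow_eq_monomial, monomial_mul, one_mul, Dz2]

lemma gw_eq (n : ℕ) :
    vA n 0 * vA n (n + 1) * ∏ j ∈ Finset.Icc 1 n, vA n j = monomial (Dw n) 1 := by
  simp only [vA_eq]
  have h1 : ∀ v : Fin (n+2), (X v : MvPolynomial (Fin (n+2)) ℂ) = X v ^ 1 := fun v => (pow_one _).symm
  rw [Finset.prod_congr rfl (fun j _ => h1 (fiA n j)), prod_X_pow_fi,
    h1 (fiA n 0), h1 (fiA n (n+1)), X_pow_eq_monomial, X_pow_eq_monomial,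
    monomial_mul, monomial_mul, one_mul, one_mul, Dw]

lemma decomp (n : ℕ) (d : Fin (n+2) →₀ ℕ)
    (H : ∀ i : Fin n, (d (fiA n i) : ℤ) - 2 * d (fiA n ((i:ℕ)+1)) + d (fiA n ((i:ℕ)+2)) = 0) :
    ∃ s t u : ℕ, d = s • Dz1 n + t • Dz2 n + u • Dw n := by
  set q : ℤ := (d (fiA n 1) : ℤ) - d (fiA n 0) with hqdef
  have H' : ∀ k, k + 2 ≤ n + 1 →
      (d (fiA n k) : ℤ) - 2 * d (fiA n (k+1)) + d (fiA n (k+2)) = 0 := by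
    intro k hk
    exact H ⟨k, by omega⟩
  have step : ∀ k, k ≤ n → (d (fiA n (k+1)) : ℤ) - d (fiA n k) = q := by
    intro k
    induction k with
    | zero => intro _; rfl
    | succ m ih =>
      intro hm
      have h1 := H' m (by omega)
      have h2 := ih (by omega)
      linarith
  have lin : ∀ k, k ≤ n + 1 → (d (fiA n k) : ℤ) = d (fiA n 0) + k * q := by
    intro k
    induction k with
    | zero => intro _; push_cast; ring
    | succ m ih =>
      intro hm
      have h1 := step m (by omega)
      have h2 := ih (by omega)
      push_cast
      push_cast at h2
      linarith
  by_cases hq : 0 ≤ q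
  · refine ⟨q.toNat, 0, d (fiA n 0), ?_⟩
    ext v
    have hv := v.isLt
    have hveq : v = fiA n (v : ℕ) := by
      apply Fin.ext; simp [fiA, Nat.mod_eq_of_lt hv]
    rw [hveq]
    rw [Finsupp.add_apply, Finsupp.add_apply, Finsupp.smul_apply, Finsupp.smul_apply,
      Finsupp.smul_apply, Dz1_apply n _ hv, Dz2_apply n _ hv, Dw_apply n _ hv,
      smul_eq_mul, smul_eq_mul, smul_eq_mul, zero_mul, add_zero, mul_one]
    zify
    rw [lin (v : ℕ) (by omega), Int.toNat_of_nonneg hq]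
    split_ifs with h1 h2
    · rw [h1]; push_cast; ring
    · ring
    · have h0 : (v : ℕ) = 0 := by omega
      rw [h0]; push_cast; ring
  · refine ⟨0, (-q).toNat, d (fiA n (n+1)), ?_⟩
    have hb := lin (n+1) le_rfl
    ext v
    have hv := v.isLt
    have hveq : v = fiA n (v : ℕ) := by
      apply Fin.ext; simp [fiA, Nat.mod_eq_of_lt hv]
    rw [hveq]
    rw [Finsupp.add_apply, Finsupp.add_apply, Finsupp.smul_apply, Finsupp.smul_apply,
      Finsupp.smul_apply, Dz1_apply n _ hv, Dz2_apply n _ hv, Dw_apply n _ hv,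
      smul_eq_mul, smul_eq_mul, smul_eq_mul, zero_mul, zero_add, mul_one]
    zify
    rw [lin (v : ℕ) (by omega), hb, Int.toNat_of_nonneg (by omega : (0:ℤ) ≤ -q)]
    push_cast at hb ⊢
    split_ifs with h1 h2
    · rw [h1]; push_cast; ring
    · rw [Nat.cast_sub (by omega : (v:ℕ) ≤ n + 1)]; push_cast; ring
    · have h0 : (v : ℕ) = n + 1 := by omega
      rw [h0]; push_cast; ring

lemma mem_invariants_iff {m k : ℕ} (w : Fin m → Fin k → ℤ) (p : MvPolynomial (Fin m) ℂ) :
    p ∈ invariants w ↔ ∀ d ∈ p.support, ∀ i : Fin k, ∑ v, (d v : ℤ) * w v i = 0 :=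
  Iff.rfl

lemma monomial_one_mem (n : ℕ) (D : Fin (n+2) →₀ ℕ)
    (h : ∀ i : Fin n, (D (fiA n i) : ℤ) - 2 * D (fiA n ((i:ℕ)+1)) + D (fiA n ((i:ℕ)+2)) = 0) :
    (monomial D 1 : MvPolynomial (Fin (n+2)) ℂ) ∈ invariants (wA n) := by
  rw [mem_invariants_iff]
  intro d hd i
  rw [MvPolynomial.support_monomial, if_neg (one_ne_zero)] at hd
  rw [Finset.mem_singleton] at hd
  subst hd
  rw [sum_wA]
  exact h i

lemma Dz1_apply' (n : ℕ) (k : ℕ) (hk : k ≤ n+1) :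
    (Dz1 n (fiA n k) : ℤ) = k := by
  rw [Dz1_apply n k (by omega)]
  split_ifs with h1 h2
  · simp [h1]
  · rfl
  · have h0 : k = 0 := by omega
    simp [h0]

lemma Dz2_apply' (n : ℕ) (k : ℕ) (hk : k ≤ n+1) :
    (Dz2 n (fiA n k) : ℤ) = (n:ℤ) + 1 - k := by
  rw [Dz2_apply n k (by omega)]
  split_ifs with h1 h2
  · simp [h1]
  · rw [Nat.cast_sub (by omega : k ≤ n+1)]; push_cast; ring
  · have : k = n + 1 := by omega
    simp [this]

lemma Dz1_inv (n : ℕ) (i : Fin n) :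
    (Dz1 n (fiA n i) : ℤ) - 2 * Dz1 n (fiA n ((i:ℕ)+1)) + Dz1 n (fiA n ((i:ℕ)+2)) = 0 := by
  have hi := i.isLt
  rw [Dz1_apply' n _ (by omega), Dz1_apply' n _ (by omega), Dz1_apply' n _ (by omega)]
  push_cast; ring

lemma Dz2_inv (n : ℕ) (i : Fin n) :
    (Dz2 n (fiA n i) : ℤ) - 2 * Dz2 n (fiA n ((i:ℕ)+1)) + Dz2 n (fiA n ((i:ℕ)+2)) = 0 := by
  have hi := i.isLt
  rw [Dz2_apply' n _ (by omega), Dz2_apply' n _ (by omega), Dz2_apply' n _ (by omega)]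
  push_cast; ring

lemma Dw_inv (n : ℕ) (i : Fin n) :
    (Dw n (fiA n i) : ℤ) - 2 * Dw n (fiA n ((i:ℕ)+1)) + Dw n (fiA n ((i:ℕ)+2)) = 0 := by
  have hi := i.isLt
  rw [Dw_apply n _ (by omega), Dw_apply n _ (by omega), Dw_apply n _ (by omega)]
  omega


set_option maxHeartbeats 1000000

/-- the ring of invariants of the torus action on
`ℂ[x₁, y₁, …, y_n, x_n]` is generated, as a `ℂ`-subalgebra, by the three monomials
`z₁ = x_n^{n+1} ∏ y_j^j`, `z₂ = x₁^{n+1} ∏ y_j^{n+1-j}` and `w = x₁ x_n ∏ y_j`. -/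
theorem statement0 (n : ℕ) (hn : 1 ≤ n) :
    invariants (wA n) =
      Algebra.adjoin ℂ
        { vA n (n + 1) ^ (n + 1) * ∏ j ∈ Finset.Icc 1 n, vA n j ^ j,
          vA n 0 ^ (n + 1) * ∏ j ∈ Finset.Icc 1 n, vA n j ^ (n + 1 - j),
          vA n 0 * vA n (n + 1) * ∏ j ∈ Finset.Icc 1 n, vA n j } := by
  apply le_antisymm
  · intro p hp
    rw [mem_invariants_iff] at hp
    rw [as_sum p]
    apply Subalgebra.sum_mem
    intro d hd
    have hmono : (monomial d (coeff d p)) = (coeff d p) • monomial d 1 := by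
      rw [smul_monomial, smul_eq_mul, mul_one]
    rw [hmono]
    apply Subalgebra.smul_mem
    have Hd : ∀ i : Fin n,
        (d (fiA n i) : ℤ) - 2 * d (fiA n ((i:ℕ)+1)) + d (fiA n ((i:ℕ)+2)) = 0 := by
      intro i
      have := hp d hd i
      rwa [sum_wA] at this
    obtain ⟨s, t, u, rfl⟩ := decomp n d Hd
    have hprod : (monomial (Dz1 n) (1:ℂ))^s * (monomial (Dz2 n) 1)^t * (monomial (Dw n) 1)^u
        = monomial (s • Dz1 n + t • Dz2 n + u • Dw n) 1 := by
      rw [monomial_pow, monomial_pow, monomial_pow, monomial_mul, monomial_mul,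
        one_pow, one_pow, one_pow, one_mul, one_mul]
    rw [← hprod, ← gz1_eq, ← gz2_eq, ← gw_eq]
    refine Subalgebra.mul_mem _ (Subalgebra.mul_mem _ (Subalgebra.pow_mem _ ?_ s)
      (Subalgebra.pow_mem _ ?_ t)) (Subalgebra.pow_mem _ ?_ u)
    · exact Algebra.subset_adjoin (Set.mem_insert _ _)
    · exact Algebra.subset_adjoin (Set.mem_insert_of_mem _ (Set.mem_insert _ _))
    · exact Algebra.subset_adjoin (Set.mem_insert_of_mem _ (Set.mem_insert_of_mem _ rfl))
  · rw [Algebra.adjoin_le_iff]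
    rintro x hx
    simp only [Set.mem_insert_iff, Set.mem_singleton_iff] at hx
    rcases hx with rfl | rfl | rfl
    · rw [gz1_eq]
      exact monomial_one_mem n _ (Dz1_inv n)
    · rw [gz2_eq]
      exact monomial_one_mem n _ (Dz2_inv n)
    · rw [gw_eq]
      exact monomial_one_mem n _ (Dw_inv n)
end

section
/- For every integer k ≥ 2, the set C = {(a, b, c) ∈ ℤ³ : a ≥ 0, b ≥ 0, c ≥ 0, a + 2kb − 2c ≥ 0, and 2c − (2k−2)b − a ≥ 0} is an additive submonoid of ℤ³, and it is generated as an additive monoid by the four elements (2, 0, 1), (0, 1, k−1), (0, 1, k), and (1, 1, k). -/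
/-- for `k ≥ 2`, the set
`C = {(a,b,c) ∈ ℤ³ : a ≥ 0, b ≥ 0, c ≥ 0, a + 2kb - 2c ≥ 0, 2c - (2k-2)b - a ≥ 0}`
is an additive submonoid of `ℤ³` generated by `(2,0,1)`, `(0,1,k-1)`, `(0,1,k)` and
`(1,1,k)`; equivalently, membership in the additive monoid closure of these four
elements is characterised exactly by the defining inequalities of `C`. -/
theorem statement2 (k : ℕ) (hk : 2 ≤ k) (p : ℤ × ℤ × ℤ) :
    p ∈ AddSubmonoid.closure
        ({((2 : ℤ), (0 : ℤ), (1 : ℤ)), (0, 1, (k : ℤ) - 1), (0, 1, (k : ℤ)), (1, 1, (k : ℤ))} :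
          Set (ℤ × ℤ × ℤ)) ↔
      0 ≤ p.1 ∧ 0 ≤ p.2.1 ∧ 0 ≤ p.2.2 ∧
        0 ≤ p.1 + 2 * (k : ℤ) * p.2.1 - 2 * p.2.2 ∧
        0 ≤ 2 * p.2.2 - (2 * (k : ℤ) - 2) * p.2.1 - p.1 := by
  have hk' : (2 : ℤ) ≤ (k : ℤ) := by exact_mod_cast hk
  set S : Set (ℤ × ℤ × ℤ) :=
    ({((2 : ℤ), (0 : ℤ), (1 : ℤ)), (0, 1, (k : ℤ) - 1), (0, 1, (k : ℤ)), (1, 1, (k : ℤ))} :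
      Set (ℤ × ℤ × ℤ)) with hS
  constructor
  · intro h
    induction h using AddSubmonoid.closure_induction with
    | mem x hx =>
      simp only [hS, Set.mem_insert_iff, Set.mem_singleton_iff] at hx
      rcases hx with hx | hx | hx | hx <;> subst hx <;>
        refine ⟨?_, ?_, ?_, ?_, ?_⟩ <;> simp <;> linarith
    | zero => simp
    | add x y _ _ hx hy =>
      obtain ⟨h1, h2, h3, h4, h5⟩ := hx
      obtain ⟨h1', h2', h3', h4', h5'⟩ := hy
      refine ⟨?_, ?_, ?_, ?_, ?_⟩ <;> simp only [Prod.fst_add, Prod.snd_add] <;> linarith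
  · rintro ⟨ha, hb, hc, hs, ht⟩
    have hg1 : ((2 : ℤ), (0 : ℤ), (1 : ℤ)) ∈ AddSubmonoid.closure S :=
      AddSubmonoid.subset_closure (by simp [hS])
    have hg2 : ((0 : ℤ), (1 : ℤ), (k : ℤ) - 1) ∈ AddSubmonoid.closure S :=
      AddSubmonoid.subset_closure (by simp [hS])
    have hg3 : ((0 : ℤ), (1 : ℤ), (k : ℤ)) ∈ AddSubmonoid.closure S :=
      AddSubmonoid.subset_closure (by simp [hS])
    have hg4 : ((1 : ℤ), (1 : ℤ), (k : ℤ)) ∈ AddSubmonoid.closure S :=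
      AddSubmonoid.subset_closure (by simp [hS])
    set a := p.1 with ha'
    set b := p.2.1 with hb'
    set c := p.2.2 with hc'
    set n4 : ℤ := a % 2 with hn4
    set n1 : ℤ := (a - n4) / 2 with hn1
    set n2 : ℤ := (a + 2 * (k : ℤ) * b - 2 * c - n4) / 2 with hn2
    set n3 : ℤ := (2 * c - (2 * (k : ℤ) - 2) * b - a - n4) / 2 with hn3
    set m : ℤ := (k : ℤ) * b with hm
    have hmrw : 2 * (k : ℤ) * b = 2 * m := by rw [hm]; ring
    have hmrw' : (2 * (k : ℤ) - 2) * b = 2 * m - 2 * b := by rw [hm]; ring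
    rw [hmrw] at hs hn2
    rw [hmrw'] at ht hn3
    have h4 : n4 = 0 ∨ n4 = 1 := by omega
    have hn4nn : 0 ≤ n4 := by omega
    have hn1nn : 0 ≤ n1 := by omega
    have e1 : 2 * n1 + n4 = a := by omega
    have hsn : 0 ≤ a + 2 * m - 2 * c - n4 := by omega
    have htn : 0 ≤ 2 * c - (2 * m - 2 * b) - a - n4 := by omega
    have hn2nn : 0 ≤ n2 := by rw [hn2]; exact Int.ediv_nonneg hsn (by norm_num)
    have hn3nn : 0 ≤ n3 := by rw [hn3]; exact Int.ediv_nonneg htn (by norm_num)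
    have e2 : 2 * n2 + n4 = a + 2 * m - 2 * c := by omega
    have e3 : 2 * n3 + n4 = 2 * c - (2 * m - 2 * b) - a := by omega
    have eb : b = n2 + n3 + n4 := by omega
    have h2c : 2 * c = 2 * n1 + 2 * ((k : ℤ) - 1) * n2 + 2 * (k : ℤ) * n3 + 2 * (k : ℤ) * n4 := by
      have hm' : m = (k : ℤ) * b := hm
      linear_combination e2 - e1 + 2 * (k : ℤ) * eb + 2 * hm' 
    have hp : p = n1.toNat • ((2 : ℤ), (0 : ℤ), (1 : ℤ)) +
        n2.toNat • ((0 : ℤ), (1 : ℤ), (k : ℤ) - 1) +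
        n3.toNat • ((0 : ℤ), (1 : ℤ), (k : ℤ)) +
        n4.toNat • ((1 : ℤ), (1 : ℤ), (k : ℤ)) := by
      have c1 : (n1.toNat : ℤ) = n1 := Int.toNat_of_nonneg hn1nn
      have c2 : (n2.toNat : ℤ) = n2 := Int.toNat_of_nonneg hn2nn
      have c3 : (n3.toNat : ℤ) = n3 := Int.toNat_of_nonneg hn3nn
      have c4 : (n4.toNat : ℤ) = n4 := Int.toNat_of_nonneg hn4nn
      have : p = (a, b, c) := rfl
      rw [this]
      simp only [Prod.ext_iff, Prod.smul_fst, Prod.smul_snd, Prod.fst_add, Prod.snd_add]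
      simp only [smul_eq_mul, nsmul_eq_mul, c1, c2, c3, c4]
      refine ⟨by linarith, by linarith, by linarith [h2c]⟩
    rw [hp]
    exact AddSubmonoid.add_mem _ (AddSubmonoid.add_mem _ (AddSubmonoid.add_mem _
      (AddSubmonoid.nsmul_mem _ hg1 _) (AddSubmonoid.nsmul_mem _ hg2 _))
      (AddSubmonoid.nsmul_mem _ hg3 _)) (AddSubmonoid.nsmul_mem _ hg4 _)
end

section
/- Let k ≥ 2 and n = 2k. The invariant ring Sᵀ (the ℂ-subalgebra of S = ℂ[x₁, x₂, x_{2k−1}, y₀, y₁, …, y_{2k−1}] consisting of all polynomials each of whose monomials has ℤ^{2k}-weight 0) equals the ℂ-subalgebra generated by the four monomials Z₁ = x₁² y₀^{2k−2} y₁^{k} y₂^{k−1} ∏_{j=3}^{2k−1} y_j^{2k−j}, Z₂ = x₂² y₀^{2k−2} y₁^{k−1} y₂^{k} ∏_{j=3}^{2k−1} y_j^{2k−j}, Z₃ = x_{2k−1}² y₀² y₁ y₂ ∏_{j=3}^{2k−1} y_j², and W = x₁ x₂ x_{2k−1} y₀^{2k−1} y₁^{k} y₂^{k} ∏_{j=3}^{2k−1}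 y_j^{2k+1−j}. -/
open MvPolynomial

/-- Weights of the torus action for the `D_n` singularity: the variables of
`S = ℂ[x₁, x₂, x_{n-1}, y₀, y₁, …, y_{n-1}]` are indexed by `Fin (n+3)` with
`0 ↦ x₁`, `1 ↦ x₂`, `2 ↦ x_{n-1}` and `3+m ↦ y_m`; the coordinate `i : Fin n`
corresponds to the basis vector `e_i` of `ℤⁿ`.  Thus `w(x₁) = e₁`, `w(x₂) = e₂`,
`w(x_{n-1}) = e_{n-1}`, `w(y₀) = -2e₀+e₁+e₂+e₃`, `w(y₁) = e₀-2e₁`, `w(y₂) = e₀-2e₂`,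
`w(y₃) = e₀-2e₃+e₄`, `w(y_m) = e_{m-1}-2e_m+e_{m+1}` for `4 ≤ m ≤ n-2` and
`w(y_{n-1}) = e_{n-2}-2e_{n-1}`. -/
def wD (n : ℕ) (v : Fin (n + 3)) (i : Fin n) : ℤ :=
  if (v : ℕ) = 0 then (if (i : ℕ) = 1 then 1 else 0)
  else if (v : ℕ) = 1 then (if (i : ℕ) = 2 then 1 else 0)
  else if (v : ℕ) = 2 then (if (i : ℕ) = n - 1 then 1 else 0)
  else if (v : ℕ) = 3 then
    (if (i : ℕ) = 0 then -2 else if (i : ℕ) = 1 ∨ (i : ℕ) = 2 ∨ (i : ℕ) = 3 then 1 else 0)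
  else if (v : ℕ) = 4 then (if (i : ℕ) = 0 then 1 else if (i : ℕ) = 1 then -2 else 0)
  else if (v : ℕ) = 5 then (if (i : ℕ) = 0 then 1 else if (i : ℕ) = 2 then -2 else 0)
  else if (v : ℕ) = 6 then
    (if (i : ℕ) = 0 then 1 else 0) + (if (i : ℕ) = 3 then -2 else 0)
      + (if (i : ℕ) = 4 then 1 else 0)
  else
    (if (i : ℕ) = (v : ℕ) - 4 then 1 else 0) + (if (i : ℕ) = (v : ℕ) - 3 then -2 else 0)
      + (if (i : ℕ) = (v : ℕ) - 2 then 1 else 0)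

/-- The variable of index `a` in `S = ℂ[x₁, x₂, x_{n-1}, y₀, y₁, …, y_{n-1}]`
(indices as in `wD`: `0 ↦ x₁`, `1 ↦ x₂`, `2 ↦ x_{n-1}`, `3+m ↦ y_m`). -/
noncomputable def vD (n : ℕ) (a : ℕ) : MvPolynomial (Fin (n + 3)) ℂ :=
  MvPolynomial.X ⟨a % (n + 3), Nat.mod_lt a (by omega)⟩

/-- The invariant monomial `Z₁ = x₁² y₀^{2k-2} y₁^k y₂^{k-1} ∏_{j=3}^{2k-1} y_j^{2k-j}`. -/
noncomputable def DZ₁ (k : ℕ) : MvPolynomial (Fin (2 * k + 3)) ℂ :=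
  vD (2 * k) 0 ^ 2 * vD (2 * k) 3 ^ (2 * k - 2) * vD (2 * k) 4 ^ k * vD (2 * k) 5 ^ (k - 1) *
    ∏ j ∈ Finset.Icc 3 (2 * k - 1), vD (2 * k) (j + 3) ^ (2 * k - j)

/-- The invariant monomial `Z₂ = x₂² y₀^{2k-2} y₁^{k-1} y₂^k ∏_{j=3}^{2k-1} y_j^{2k-j}`. -/
noncomputable def DZ₂ (k : ℕ) : MvPolynomial (Fin (2 * k + 3)) ℂ :=
  vD (2 * k) 1 ^ 2 * vD (2 * k) 3 ^ (2 * k - 2) * vD (2 * k) 4 ^ (k - 1) * vD (2 * k) 5 ^ k *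
    ∏ j ∈ Finset.Icc 3 (2 * k - 1), vD (2 * k) (j + 3) ^ (2 * k - j)

/-- The invariant monomial `Z₃ = x_{2k-1}² y₀² y₁ y₂ ∏_{j=3}^{2k-1} y_j²`. -/
noncomputable def DZ₃ (k : ℕ) : MvPolynomial (Fin (2 * k + 3)) ℂ :=
  vD (2 * k) 2 ^ 2 * vD (2 * k) 3 ^ 2 * vD (2 * k) 4 * vD (2 * k) 5 *
    ∏ j ∈ Finset.Icc 3 (2 * k - 1), vD (2 * k) (j + 3) ^ 2

/-- The invariant monomial `W = x₁ x₂ x_{2k-1} y₀^{2k-1} y₁^k y₂^k ∏_{j=3}^{2k-1} y_j^{2k+1-j}`. -/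
noncomputable def DW (k : ℕ) : MvPolynomial (Fin (2 * k + 3)) ℂ :=
  vD (2 * k) 0 * vD (2 * k) 1 * vD (2 * k) 2 * vD (2 * k) 3 ^ (2 * k - 1) * vD (2 * k) 4 ^ k *
      vD (2 * k) 5 ^ k *
    ∏ j ∈ Finset.Icc 3 (2 * k - 1), vD (2 * k) (j + 3) ^ (2 * k + 1 - j)

/-- Exponent vector (as a function on ℕ) of the monomial `Z₁^p Z₂^q Z₃^r W^s`. -/
def expD (k p q r s : ℕ) : ℕ → ℕ := fun j =>
  if j = 0 then 2*p + s
  else if j = 1 then 2*q + s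
  else if j = 2 then 2*r + s
  else if j = 3 then (2*k-2)*(p+q) + 2*r + (2*k-1)*s
  else if j = 4 then k*p + (k-1)*q + r + k*s
  else if j = 5 then (k-1)*p + k*q + r + k*s
  else if j ≤ 2*k+2 then (2*k+3-j)*(p+q) + 2*r + (2*k+4-j)*s
  else 0

noncomputable def ED (k p q r s : ℕ) : Fin (2*k+3) →₀ ℕ :=
  Finsupp.equivFunOnFinite.symm (fun v => expD k p q r s v.val)

lemma ED_apply (k p q r s : ℕ) (v : Fin (2*k+3)) :
    ED k p q r s v = expD k p q r s v.val :=
  congrFun (Finsupp.coe_equivFunOnFinite_symm _) _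

lemma prodX {N : ℕ} (s : Finset ℕ) (f : ℕ → Fin N) (e : ℕ → ℕ) :
    (∏ j ∈ s, (MvPolynomial.X (f j) : MvPolynomial (Fin N) ℂ) ^ e j)
      = MvPolynomial.monomial (∑ j ∈ s, Finsupp.single (f j) (e j)) 1 := by
  induction s using Finset.cons_induction with
  | empty => simp
  | cons a s ha ih =>
      rw [Finset.prod_cons, Finset.sum_cons, ih, MvPolynomial.X_pow_eq_monomial,
        MvPolynomial.monomial_mul, one_mul]

def fD (k : ℕ) (j : ℕ) : Fin (2*k+3) := ⟨(j+3) % (2*k+3), Nat.mod_lt _ (by omega)⟩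

lemma sumsingle (k : ℕ) (g : ℕ → ℕ) (v : Fin (2*k+3)) :
    (∑ j ∈ Finset.Icc 3 (2*k-1), Finsupp.single (fD k j) (g j)) v
      = if 6 ≤ v.val ∧ v.val ≤ 2*k+2 then g (v.val - 3) else 0 := by
  rw [Finsupp.finset_sum_apply]
  have h1 : ∀ j ∈ Finset.Icc 3 (2*k-1),
      (Finsupp.single (fD k j) (g j)) v = if j = v.val - 3 then g j else 0 := by
    intro j hj
    have hj' := Finset.mem_Icc.mp hj
    have hm : (j+3) % (2*k+3) = j+3 := Nat.mod_eq_of_lt (by omega)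
    rw [Finsupp.single_apply]
    refine if_congr ?_ rfl rfl
    rw [Fin.ext_iff]
    show (j+3) % (2*k+3) = v.val ↔ _
    rw [hm]
    omega
  rw [Finset.sum_congr rfl h1, Finset.sum_ite_eq']
  refine if_congr ?_ rfl rfl
  rw [Finset.mem_Icc]
  omega
lemma vD_eq {n a : ℕ} (h : a < n+3) : vD n a = MvPolynomial.X ⟨a, h⟩ := by
  unfold vD; congr 1; exact Fin.ext (Nat.mod_eq_of_lt h)

lemma hprod1 (k : ℕ) (e : ℕ → ℕ) : (∏ j ∈ Finset.Icc 3 (2*k-1), vD (2*k) (j+3) ^ (e j))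
      = MvPolynomial.monomial (∑ j ∈ Finset.Icc 3 (2*k-1), Finsupp.single (fD k j) (e j)) 1 := by
  rw [← prodX]
  exact Finset.prod_congr rfl fun j _ => rfl

set_option maxHeartbeats 1000000 in


lemma X1 {N : ℕ} (v : Fin N) :
    (MvPolynomial.X v : MvPolynomial (Fin N) ℂ) = MvPolynomial.monomial (Finsupp.single v 1) 1 := by
  rw [← pow_one (MvPolynomial.X v), MvPolynomial.X_pow_eq_monomial]

lemma single_apply' {N a vv : ℕ} (h : a < N) (hv : vv < N) (b : ℕ) :
    (Finsupp.single (⟨a,h⟩ : Fin N) b) (⟨vv,hv⟩ : Fin N) = if vv = a then b else 0 := by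
  rw [Finsupp.single_apply]
  exact if_congr (by rw [Fin.ext_iff]; exact eq_comm) rfl rfl

lemma sumsingle' (k : ℕ) (g : ℕ → ℕ) (vv : ℕ) (hv : vv < 2*k+3) :
    (∑ j ∈ Finset.Icc 3 (2*k-1), Finsupp.single (fD k j) (g j)) (⟨vv,hv⟩ : Fin (2*k+3))
      = if 6 ≤ vv ∧ vv ≤ 2*k+2 then g (vv - 3) else 0 := sumsingle k g _

lemma DZ₁_eq (k : ℕ) (hk : 2 ≤ k) :
    DZ₁ k = MvPolynomial.monomial (ED k 1 0 0 0) 1 := by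
  rw [DZ₁, hprod1, vD_eq (show 0 < 2*k+3 by omega), vD_eq (show 3 < 2*k+3 by omega),
    vD_eq (show 4 < 2*k+3 by omega), vD_eq (show 5 < 2*k+3 by omega)]
  rw [MvPolynomial.X_pow_eq_monomial, MvPolynomial.X_pow_eq_monomial,
    MvPolynomial.X_pow_eq_monomial, MvPolynomial.X_pow_eq_monomial]
  rw [MvPolynomial.monomial_mul, MvPolynomial.monomial_mul, MvPolynomial.monomial_mul,
    MvPolynomial.monomial_mul]
  rw [show (1*1*1*1*1 : ℂ) = 1 by norm_num]
  refine congrArg (fun E => MvPolynomial.monomial E (1:ℂ)) ?_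
  ext v
  rcases v with ⟨vv, hv⟩
  rw [Finsupp.add_apply, Finsupp.add_apply, Finsupp.add_apply, Finsupp.add_apply,
    single_apply', single_apply', single_apply', single_apply', sumsingle', ED_apply]
  show _ = expD k 1 0 0 0 vv
  unfold expD
  split_ifs <;> omega

set_option maxHeartbeats 1000000 in
lemma DZ₂_eq (k : ℕ) (hk : 2 ≤ k) :
    DZ₂ k = MvPolynomial.monomial (ED k 0 1 0 0) 1 := by
  rw [DZ₂, hprod1, vD_eq (show 1 < 2*k+3 by omega), vD_eq (show 3 < 2*k+3 by omega),
    vD_eq (show 4 < 2*k+3 by omega), vD_eq (show 5 < 2*k+3 by omega)]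
  rw [MvPolynomial.X_pow_eq_monomial, MvPolynomial.X_pow_eq_monomial,
    MvPolynomial.X_pow_eq_monomial, MvPolynomial.X_pow_eq_monomial]
  rw [MvPolynomial.monomial_mul, MvPolynomial.monomial_mul, MvPolynomial.monomial_mul,
    MvPolynomial.monomial_mul]
  rw [show (1*1*1*1*1 : ℂ) = 1 by norm_num]
  refine congrArg (fun E => MvPolynomial.monomial E (1:ℂ)) ?_
  ext v
  rcases v with ⟨vv, hv⟩
  rw [Finsupp.add_apply, Finsupp.add_apply, Finsupp.add_apply, Finsupp.add_apply,
    single_apply', single_apply', single_apply', single_apply', sumsingle', ED_apply]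
  show _ = expD k 0 1 0 0 vv
  unfold expD
  split_ifs <;> omega

set_option maxHeartbeats 1000000 in
lemma DZ₃_eq (k : ℕ) (hk : 2 ≤ k) :
    DZ₃ k = MvPolynomial.monomial (ED k 0 0 1 0) 1 := by
  rw [DZ₃, hprod1, vD_eq (show 2 < 2*k+3 by omega), vD_eq (show 3 < 2*k+3 by omega),
    vD_eq (show 4 < 2*k+3 by omega), vD_eq (show 5 < 2*k+3 by omega)]
  rw [MvPolynomial.X_pow_eq_monomial, MvPolynomial.X_pow_eq_monomial, X1, X1]
  rw [MvPolynomial.monomial_mul, MvPolynomial.monomial_mul, MvPolynomial.monomial_mul,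
    MvPolynomial.monomial_mul]
  rw [show (1*1*1*1*1 : ℂ) = 1 by norm_num]
  refine congrArg (fun E => MvPolynomial.monomial E (1:ℂ)) ?_
  ext v
  rcases v with ⟨vv, hv⟩
  rw [Finsupp.add_apply, Finsupp.add_apply, Finsupp.add_apply, Finsupp.add_apply,
    single_apply', single_apply', single_apply', single_apply', sumsingle', ED_apply]
  show _ = expD k 0 0 1 0 vv
  unfold expD
  split_ifs <;> omega

set_option maxHeartbeats 1000000 in
lemma DW_eq (k : ℕ) (hk : 2 ≤ k) :
    DW k = MvPolynomial.monomial (ED k 0 0 0 1) 1 := by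
  rw [DW, hprod1, vD_eq (show 0 < 2*k+3 by omega), vD_eq (show 1 < 2*k+3 by omega),
    vD_eq (show 2 < 2*k+3 by omega), vD_eq (show 3 < 2*k+3 by omega),
    vD_eq (show 4 < 2*k+3 by omega), vD_eq (show 5 < 2*k+3 by omega)]
  rw [MvPolynomial.X_pow_eq_monomial, MvPolynomial.X_pow_eq_monomial,
    MvPolynomial.X_pow_eq_monomial, X1, X1, X1]
  rw [MvPolynomial.monomial_mul, MvPolynomial.monomial_mul, MvPolynomial.monomial_mul,
    MvPolynomial.monomial_mul, MvPolynomial.monomial_mul, MvPolynomial.monomial_mul]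
  rw [show (1*1*1*1*1*1*1 : ℂ) = 1 by norm_num]
  refine congrArg (fun E => MvPolynomial.monomial E (1:ℂ)) ?_
  ext v
  rcases v with ⟨vv, hv⟩
  rw [Finsupp.add_apply, Finsupp.add_apply, Finsupp.add_apply, Finsupp.add_apply,
    Finsupp.add_apply, Finsupp.add_apply, single_apply', single_apply', single_apply',
    single_apply', single_apply', single_apply', sumsingle', ED_apply]
  show _ = expD k 0 0 0 1 vv
  unfold expD
  split_ifs <;> omega

lemma ED_decomp (k p q r s : ℕ) :
    ED k p q r s = p • ED k 1 0 0 0 + q • ED k 0 1 0 0 + r • ED k 0 0 1 0 + s • ED k 0 0 0 1 := by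
  ext v
  simp only [Finsupp.add_apply, Finsupp.smul_apply, ED_apply, smul_eq_mul]
  unfold expD
  split_ifs <;> ring

lemma mono_ED (k p q r s : ℕ) (hk : 2 ≤ k) :
    MvPolynomial.monomial (ED k p q r s) (1:ℂ)
      = DZ₁ k ^ p * DZ₂ k ^ q * DZ₃ k ^ r * DW k ^ s := by
  rw [DZ₁_eq k hk, DZ₂_eq k hk, DZ₃_eq k hk, DW_eq k hk,
    MvPolynomial.monomial_pow, MvPolynomial.monomial_pow, MvPolynomial.monomial_pow,
    MvPolynomial.monomial_pow, MvPolynomial.monomial_mul, MvPolynomial.monomial_mul,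
    MvPolynomial.monomial_mul, one_pow, one_pow, one_pow, one_pow, one_mul, one_mul, one_mul,
    ED_decomp]

/-- ℕ-indexed version of the weight function. -/
def wN (n : ℕ) (a i : ℕ) : ℤ :=
  if a = 0 then (if i = 1 then 1 else 0)
  else if a = 1 then (if i = 2 then 1 else 0)
  else if a = 2 then (if i = n - 1 then 1 else 0)
  else if a = 3 then
    (if i = 0 then -2 else if i = 1 ∨ i = 2 ∨ i = 3 then 1 else 0)
  else if a = 4 then (if i = 0 then 1 else if i = 1 then -2 else 0)
  else if a = 5 then (if i = 0 then 1 else if i = 2 then -2 else 0)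
  else if a = 6 then
    (if i = 0 then 1 else 0) + (if i = 3 then -2 else 0) + (if i = 4 then 1 else 0)
  else
    (if i = a - 4 then 1 else 0) + (if i = a - 3 then -2 else 0) + (if i = a - 2 then 1 else 0)

lemma wD_eq_wN (n : ℕ) (v : Fin (n+3)) (i : Fin n) : wD n v i = wN n v.val i.val := rfl

/-- value of the exponent finsupp at a natural index, 0 out of range -/
def dnI {k : ℕ} (d : Fin (2*k+3) →₀ ℕ) (j : ℕ) : ℤ :=
  if h : j < 2*k+3 then (d ⟨j,h⟩ : ℤ) else 0

lemma Ssum (k : ℕ) (hk : 2 ≤ k) (d : Fin (2*k+3) →₀ ℕ) (i : Fin (2*k)) :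
    ∑ v, (d v : ℤ) * wD (2*k) v i =
      dnI d 0 * (if i.val = 1 then 1 else 0)
    + dnI d 1 * (if i.val = 2 then 1 else 0)
    + dnI d 2 * (if i.val = 2*k-1 then 1 else 0)
    + dnI d 3 * (if i.val = 0 then -2 else if i.val = 1 ∨ i.val = 2 ∨ i.val = 3 then 1 else 0)
    + dnI d 4 * (if i.val = 0 then 1 else if i.val = 1 then -2 else 0)
    + dnI d 5 * (if i.val = 0 then 1 else if i.val = 2 then -2 else 0)
    + dnI d 6 * ((if i.val = 0 then 1 else 0) + (if i.val = 3 then -2 else 0)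
        + (if i.val = 4 then 1 else 0))
    + ((if 7 ≤ i.val+2 ∧ i.val+2 < 2*k+3 then dnI d (i.val+2) else 0)
       - 2*(if 7 ≤ i.val+3 ∧ i.val+3 < 2*k+3 then dnI d (i.val+3) else 0)
       + (if 7 ≤ i.val+4 ∧ i.val+4 < 2*k+3 then dnI d (i.val+4) else 0)) := by
  have step1 : ∑ v, (d v : ℤ) * wD (2*k) v i
      = ∑ j ∈ Finset.range (2*k+3), dnI d j * wN (2*k) j i.val := by
    rw [← Fin.sum_univ_eq_sum_range (fun j => dnI d j * wN (2*k) j i.val) (2*k+3)]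
    refine Finset.sum_congr rfl fun v _ => ?_
    rw [wD_eq_wN]
    unfold dnI
    rw [dif_pos v.isLt]
  rw [step1]
  have hsplit : Finset.range (2*k+3) = Finset.range 7 ∪ Finset.Ico 7 (2*k+3) := by
    rw [Finset.range_eq_Ico]
    exact (Finset.Ico_union_Ico_eq_Ico (by omega) (by omega)).symm
  rw [hsplit, Finset.sum_union (by
    simp only [Finset.disjoint_left, Finset.mem_range, Finset.mem_Ico]
    omega)]
  have h7 : ∑ j ∈ Finset.range 7, dnI d j * wN (2*k) j i.val
      = dnI d 0 * (if i.val = 1 then 1 else 0)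
      + dnI d 1 * (if i.val = 2 then 1 else 0)
      + dnI d 2 * (if i.val = 2*k-1 then 1 else 0)
      + dnI d 3 * (if i.val = 0 then -2 else if i.val = 1 ∨ i.val = 2 ∨ i.val = 3 then 1 else 0)
      + dnI d 4 * (if i.val = 0 then 1 else if i.val = 1 then -2 else 0)
      + dnI d 5 * (if i.val = 0 then 1 else if i.val = 2 then -2 else 0)
      + dnI d 6 * ((if i.val = 0 then 1 else 0) + (if i.val = 3 then -2 else 0)
          + (if i.val = 4 then 1 else 0)) := by
    rw [Finset.sum_range_succ, Finset.sum_range_succ, Finset.sum_range_succ,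
      Finset.sum_range_succ, Finset.sum_range_succ, Finset.sum_range_succ,
      Finset.sum_range_succ, Finset.sum_range_zero]
    norm_num [wN]
  rw [h7]
  have hIco : ∑ j ∈ Finset.Ico 7 (2*k+3), dnI d j * wN (2*k) j i.val
      = (if 7 ≤ i.val+2 ∧ i.val+2 < 2*k+3 then dnI d (i.val+2) else 0)
       - 2*(if 7 ≤ i.val+3 ∧ i.val+3 < 2*k+3 then dnI d (i.val+3) else 0)
       + (if 7 ≤ i.val+4 ∧ i.val+4 < 2*k+3 then dnI d (i.val+4) else 0) := by
    have hterm : ∀ j ∈ Finset.Ico 7 (2*k+3), dnI d j * wN (2*k) j i.val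
        = (if j = i.val+2 then dnI d j else 0) + (-2) * (if j = i.val+3 then dnI d j else 0)
          + (if j = i.val+4 then dnI d j else 0) := by
      intro j hj
      have hj' := Finset.mem_Ico.mp hj
      have hw : wN (2*k) j i.val = (if i.val = j - 4 then 1 else 0)
          + (if i.val = j - 3 then -2 else 0) + (if i.val = j - 2 then 1 else 0) := by
        unfold wN
        rw [if_neg (by omega), if_neg (by omega), if_neg (by omega), if_neg (by omega),
          if_neg (by omega), if_neg (by omega), if_neg (by omega)]
      rw [hw]
      have e1 : (if i.val = j - 4 then (1:ℤ) else 0) = (if j = i.val+4 then 1 else 0) :=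
        if_congr (by omega) rfl rfl
      have e2 : (if i.val = j - 3 then (-2:ℤ) else 0) = (if j = i.val+3 then -2 else 0) :=
        if_congr (by omega) rfl rfl
      have e3 : (if i.val = j - 2 then (1:ℤ) else 0) = (if j = i.val+2 then 1 else 0) :=
        if_congr (by omega) rfl rfl
      rw [e1, e2, e3]
      split_ifs <;> ring
    rw [Finset.sum_congr rfl hterm, Finset.sum_add_distrib, Finset.sum_add_distrib,
      ← Finset.mul_sum, Finset.sum_ite_eq', Finset.sum_ite_eq', Finset.sum_ite_eq']
    simp only [Finset.mem_Ico]
    ring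
  rw [hIco]

lemma dnI_pos {k : ℕ} (d : Fin (2*k+3) →₀ ℕ) (j : ℕ) (h : j < 2*k+3) :
    dnI d j = ((d ⟨j, h⟩ : ℕ) : ℤ) := dif_pos h

lemma dnI_neg {k : ℕ} (d : Fin (2*k+3) →₀ ℕ) (j : ℕ) (h : ¬ j < 2*k+3) :
    dnI d j = 0 := dif_neg h

set_option maxHeartbeats 2000000 in
lemma solveD (k : ℕ) (hk : 2 ≤ k) (d : Fin (2*k+3) →₀ ℕ)
    (H : ∀ i : Fin (2*k), ∑ v, (d v : ℤ) * wD (2*k) v i = 0) :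
    ∃ p q r s : ℕ, d = ED k p q r s := by
  have hH : ∀ m, m < 2*k →
      dnI d 0 * (if m = 1 then 1 else 0)
    + dnI d 1 * (if m = 2 then 1 else 0)
    + dnI d 2 * (if m = 2*k-1 then 1 else 0)
    + dnI d 3 * (if m = 0 then -2 else if m = 1 ∨ m = 2 ∨ m = 3 then 1 else 0)
    + dnI d 4 * (if m = 0 then 1 else if m = 1 then -2 else 0)
    + dnI d 5 * (if m = 0 then 1 else if m = 2 then -2 else 0)
    + dnI d 6 * ((if m = 0 then 1 else 0) + (if m = 3 then -2 else 0)
        + (if m = 4 then 1 else 0))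
    + ((if 7 ≤ m+2 ∧ m+2 < 2*k+3 then dnI d (m+2) else 0)
       - 2*(if 7 ≤ m+3 ∧ m+3 < 2*k+3 then dnI d (m+3) else 0)
       + (if 7 ≤ m+4 ∧ m+4 < 2*k+3 then dnI d (m+4) else 0)) = 0 := by
    intro m hm
    have h0 := H ⟨m, hm⟩
    rw [Ssum k hk] at h0
    exact h0
  have Eq0 : dnI d 4 + dnI d 5 + dnI d 6 = 2 * dnI d 3 := by
    have h := hH 0 (by omega)
    norm_num at h
    split_ifs at h <;> omega
  have Eq1 : dnI d 0 + dnI d 3 = 2 * dnI d 4 := by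
    have h := hH 1 (by omega)
    norm_num at h
    split_ifs at h <;> omega
  have Eq2 : dnI d 1 + dnI d 3 = 2 * dnI d 5 := by
    have h := hH 2 (by omega)
    norm_num at h
    split_ifs at h <;> omega
  have Eq3 : (if k = 2 then dnI d 2 else 0) + dnI d 3 + dnI d 7 = 2 * dnI d 6 := by
    have h := hH 3 (by omega)
    norm_num at h
    by_cases hk2 : k = 2
    · rw [if_pos hk2]
      have h7 : dnI d 7 = 0 := dnI_neg d 7 (by omega)
      subst hk2
      norm_num at h
      omega
    · rw [if_neg hk2]
      split_ifs at h <;> omega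
  have Echain : ∀ m, 4 ≤ m → m ≤ 2*k-2 →
      dnI d (m+2) + dnI d (m+4) = 2 * dnI d (m+3) := by
    intro m h4 hle
    have h := hH m (by omega)
    by_cases hm4 : m = 4
    · subst hm4
      norm_num at h ⊢
      split_ifs at h <;> omega
    · simp only [if_neg (show ¬(m = 1) by omega), if_neg (show ¬(m = 2) by omega),
        if_neg (show ¬(m = 2*k-1) by omega), if_neg (show ¬(m = 0) by omega),
        if_neg (show ¬(m = 1 ∨ m = 2 ∨ m = 3) by omega), if_neg (show ¬(m = 3) by omega),
        if_neg (show ¬(m = 4) by omega),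
        if_pos (show 7 ≤ m+2 ∧ m+2 < 2*k+3 by omega),
        if_pos (show 7 ≤ m+3 ∧ m+3 < 2*k+3 by omega),
        if_pos (show 7 ≤ m+4 ∧ m+4 < 2*k+3 by omega),
        mul_zero, mul_one, add_zero, zero_add] at h
      omega
  have Elast : 3 ≤ k → dnI d 2 + dnI d (2*k+1) = 2 * dnI d (2*k+2) := by
    intro hk3
    have h := hH (2*k-1) (by omega)
    simp only [if_neg (show ¬(2*k-1 = 1) by omega), if_neg (show ¬(2*k-1 = 2) by omega),
      if_pos (show 2*k-1 = 2*k-1 from rfl), if_neg (show ¬(2*k-1 = 0) by omega),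
      if_neg (show ¬(2*k-1 = 1 ∨ 2*k-1 = 2 ∨ 2*k-1 = 3) by omega),
      if_neg (show ¬(2*k-1 = 3) by omega), if_neg (show ¬(2*k-1 = 4) by omega),
      if_pos (show 7 ≤ 2*k-1+2 ∧ 2*k-1+2 < 2*k+3 by omega),
      if_pos (show 7 ≤ 2*k-1+3 ∧ 2*k-1+3 < 2*k+3 by omega),
      if_neg (show ¬(7 ≤ 2*k-1+4 ∧ 2*k-1+4 < 2*k+3) by omega),
      if_true, mul_zero, mul_one, add_zero, zero_add] at h
    rw [show 2*k-1+2 = 2*k+1 by omega, show 2*k-1+3 = 2*k+2 by omega] at h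
    omega
  -- closed form along the chain
  have key : ∀ j, 6 ≤ j → j ≤ 2*k+2 →
      2 * dnI d j = 2 * dnI d 3 - ((j:ℤ) - 5) * (dnI d 0 + dnI d 1) := by
    intro j
    induction j using Nat.strong_induction_on with
    | _ j ih =>
      intro h6 hle
      rcases (by omega : j = 6 ∨ j = 7 ∨ 8 ≤ j) with hj | hj | hj
      · subst hj
        push_cast
        linarith [Eq0, Eq1, Eq2]
      · subst hj
        have hk3 : 3 ≤ k := by omega
        rw [if_neg (show ¬ k = 2 by omega)] at Eq3
        have k6 := ih 6 (by omega) (by omega) (by omega)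
        push_cast at k6 ⊢
        linarith [Eq3, k6]
      · have hc := Echain (j-4) (by omega) (by omega)
        rw [show j-4+2 = j-2 by omega, show j-4+4 = j by omega,
          show j-4+3 = j-1 by omega] at hc
        have ih1 := ih (j-1) (by omega) (by omega) (by omega)
        have ih2 := ih (j-2) (by omega) (by omega) (by omega)
        have c1 : ((j-1:ℕ):ℤ) = (j:ℤ) - 1 := by omega
        have c2 : ((j-2:ℕ):ℤ) = (j:ℤ) - 2 := by omega
        rw [c1] at ih1
        rw [c2] at ih2
        linear_combination (2:ℤ) * hc + 2 * ih1 - ih2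
  -- the value of y₀ (= dnI d 3)
  have hY0 : 2 * dnI d 3 = 2 * dnI d 2 + (2*(k:ℤ) - 2) * (dnI d 0 + dnI d 1) := by
    by_cases hk2 : k = 2
    · rw [if_pos hk2] at Eq3
      have h7 : dnI d 7 = 0 := dnI_neg d 7 (by omega)
      have k6 := key 6 (by omega) (by omega)
      push_cast at k6
      have hkc : ((k:ℕ):ℤ) = 2 := by omega
      rw [hkc]
      norm_num
      linarith [Eq3, k6, h7]
    · have hk3 : 3 ≤ k := by omega
      have hl := Elast hk3
      have k1 := key (2*k+1) (by omega) (by omega)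
      have k2 := key (2*k+2) (by omega) (by omega)
      push_cast at k1 k2 ⊢
      linear_combination (-2:ℤ) * hl + k1 - 2 * k2
  -- names for the x-variable exponents
  have h0v : (0:ℕ) < 2*k+3 := by omega
  have h1v : (1:ℕ) < 2*k+3 := by omega
  have h2v : (2:ℕ) < 2*k+3 := by omega
  have e0 : dnI d 0 = ((d ⟨0, h0v⟩ : ℕ) : ℤ) := dnI_pos d 0 h0v
  have e1 : dnI d 1 = ((d ⟨1, h1v⟩ : ℕ) : ℤ) := dnI_pos d 1 h1v
  have e2 : dnI d 2 = ((d ⟨2, h2v⟩ : ℕ) : ℤ) := dnI_pos d 2 h2v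
  have hab : dnI d 0 + dnI d 1 = 2 * (dnI d 4 + dnI d 5 - dnI d 3) := by
    linarith [Eq1, Eq2]
  obtain ⟨w, hw⟩ : ∃ w : ℤ, 2 * dnI d 3 = 2 * dnI d 2 + 4 * w :=
    ⟨((k:ℤ)-1) * (dnI d 4 + dnI d 5 - dnI d 3), by
      linear_combination hY0 + (2*(k:ℤ)-2) * hab⟩
  obtain ⟨p, s, hps, hs2⟩ : ∃ p s, (d ⟨0,h0v⟩ : ℕ) = 2*p + s ∧ s < 2 :=
    ⟨(d ⟨0,h0v⟩)/2, (d ⟨0,h0v⟩)%2, by omega, by omega⟩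
  obtain ⟨q, hq⟩ : ∃ q, (d ⟨1,h1v⟩ : ℕ) = 2*q + s := ⟨(d ⟨1,h1v⟩)/2, by omega⟩
  obtain ⟨r, hr⟩ : ∃ r, (d ⟨2,h2v⟩ : ℕ) = 2*r + s := ⟨(d ⟨2,h2v⟩)/2, by omega⟩
  have zA : dnI d 0 = 2*(p:ℤ) + s := by omega
  have zB : dnI d 1 = 2*(q:ℤ) + s := by omega
  have zC : dnI d 2 = 2*(r:ℤ) + s := by omega
  refine ⟨p, q, r, s, ?_⟩
  ext v
  obtain ⟨vv, hv⟩ := v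
  rw [ED_apply]
  show d ⟨vv,hv⟩ = expD k p q r s vv
  have hdv : dnI d vv = ((d ⟨vv,hv⟩ : ℕ) : ℤ) := dnI_pos d vv hv
  rcases (by omega : vv = 0 ∨ vv = 1 ∨ vv = 2 ∨ vv = 3 ∨ vv = 4 ∨ vv = 5 ∨
      (6 ≤ vv ∧ vv ≤ 2*k+2)) with h|h|h|h|h|h|h
  · subst h
    show d ⟨0,hv⟩ = 2*p + s
    have hsame : d ⟨0,hv⟩ = d ⟨0,h0v⟩ := rfl
    omega
  · subst h
    show d ⟨1,hv⟩ = 2*q + s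
    have hsame : d ⟨1,hv⟩ = d ⟨1,h1v⟩ := rfl
    omega
  · subst h
    show d ⟨2,hv⟩ = 2*r + s
    have hsame : d ⟨2,hv⟩ = d ⟨2,h2v⟩ := rfl
    omega
  · subst h
    show d ⟨3,hv⟩ = (2*k-2)*(p+q) + 2*r + (2*k-1)*s
    refine (Nat.cast_inj (R := ℤ)).mp ?_
    have t1 : ((2*k-2:ℕ):ℤ) = 2*(k:ℤ)-2 := by omega
    have t2 : ((2*k-1:ℕ):ℤ) = 2*(k:ℤ)-1 := by omega
    push_cast [t1, t2]
    apply mul_left_cancel₀ (show (2:ℤ) ≠ 0 by norm_num)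
    linear_combination hY0 + (2*(k:ℤ)-2)*(zA+zB) + 2*zC - 2*hdv
  · subst h
    show d ⟨4,hv⟩ = k*p + (k-1)*q + r + k*s
    refine (Nat.cast_inj (R := ℤ)).mp ?_
    have t1 : ((k-1:ℕ):ℤ) = (k:ℤ)-1 := by omega
    push_cast [t1]
    apply mul_left_cancel₀ (show (4:ℤ) ≠ 0 by norm_num)
    linear_combination (-4:ℤ)*hdv - 2*Eq1 + hY0 + (2*(k:ℤ))*zA + (2*(k:ℤ)-2)*zB + 2*zC
  · subst h
    show d ⟨5,hv⟩ = (k-1)*p + k*q + r + k*s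
    refine (Nat.cast_inj (R := ℤ)).mp ?_
    have t1 : ((k-1:ℕ):ℤ) = (k:ℤ)-1 := by omega
    push_cast [t1]
    apply mul_left_cancel₀ (show (4:ℤ) ≠ 0 by norm_num)
    linear_combination (-4:ℤ)*hdv - 2*Eq2 + hY0 + (2*(k:ℤ)-2)*zA + (2*(k:ℤ))*zB + 2*zC
  · have hkey := key vv h.1 h.2
    have hx : expD k p q r s vv = (2*k+3-vv)*(p+q) + 2*r + (2*k+4-vv)*s := by
      unfold expD
      rw [if_neg (by omega), if_neg (by omega), if_neg (by omega), if_neg (by omega),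
        if_neg (by omega), if_neg (by omega), if_pos (by omega)]
    rw [hx]
    refine (Nat.cast_inj (R := ℤ)).mp ?_
    have t1 : ((2*k+3-vv:ℕ):ℤ) = 2*(k:ℤ)+3-(vv:ℤ) := by omega
    have t2 : ((2*k+4-vv:ℕ):ℤ) = 2*(k:ℤ)+4-(vv:ℤ) := by omega
    push_cast [t1, t2]
    apply mul_left_cancel₀ (show (2:ℤ) ≠ 0 by norm_num)
    linear_combination (-2:ℤ)*hdv + hkey + hY0 + (2*(k:ℤ)+3-(vv:ℤ))*(zA + zB) + 2*zC


lemma dnI_ED (k p q r s : ℕ) (hk : 2 ≤ k) : ∀ j, dnI (ED k p q r s) j = ((expD k p q r s j : ℕ) : ℤ) := by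
  intro j
  by_cases h : j < 2*k+3
  · rw [dnI_pos _ j h]
    exact congrArg _ (ED_apply k p q r s ⟨j,h⟩)
  · rw [dnI_neg _ j h]
    have hz : expD k p q r s j = 0 := by
      unfold expD
      split_ifs <;> omega
    rw [hz]
    norm_num

set_option maxHeartbeats 2000000 in
lemma EDzero (k p q r s : ℕ) (hk : 2 ≤ k) (i : Fin (2*k)) :
    ∑ v, ((ED k p q r s) v : ℤ) * wD (2*k) v i = 0 := by
  rw [Ssum k hk]
  have hm : (i:ℕ) < 2*k := i.isLt
  set m := (i : ℕ) with hmi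
  clear_value m
  have t1 : ((2*k-2:ℕ):ℤ) = 2*(k:ℤ)-2 := by omega
  have t2 : ((2*k-1:ℕ):ℤ) = 2*(k:ℤ)-1 := by omega
  have t3 : ((k-1:ℕ):ℤ) = (k:ℤ)-1 := by omega
  have z0 : dnI (ED k p q r s) 0 = 2*(p:ℤ) + s := by
    rw [dnI_ED k p q r s hk]; show ((2*p+s : ℕ) : ℤ) = _; push_cast; ring
  have z1 : dnI (ED k p q r s) 1 = 2*(q:ℤ) + s := by
    rw [dnI_ED k p q r s hk]; show ((2*q+s : ℕ) : ℤ) = _; push_cast; ring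
  have z2 : dnI (ED k p q r s) 2 = 2*(r:ℤ) + s := by
    rw [dnI_ED k p q r s hk]; show ((2*r+s : ℕ) : ℤ) = _; push_cast; ring
  have z3 : dnI (ED k p q r s) 3 = (2*(k:ℤ)-2)*((p:ℤ)+q) + 2*r + (2*(k:ℤ)-1)*s := by
    rw [dnI_ED k p q r s hk]; show (((2*k-2)*(p+q) + 2*r + (2*k-1)*s : ℕ) : ℤ) = _
    push_cast [t1, t2]; ring
  have z4 : dnI (ED k p q r s) 4 = (k:ℤ)*p + ((k:ℤ)-1)*q + r + (k:ℤ)*s := by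
    rw [dnI_ED k p q r s hk]; show ((k*p + (k-1)*q + r + k*s : ℕ) : ℤ) = _
    push_cast [t3]; ring
  have z5 : dnI (ED k p q r s) 5 = ((k:ℤ)-1)*p + (k:ℤ)*q + r + (k:ℤ)*s := by
    rw [dnI_ED k p q r s hk]; show (((k-1)*p + k*q + r + k*s : ℕ) : ℤ) = _
    push_cast [t3]; ring
  have zv : ∀ j, 6 ≤ j → j ≤ 2*k+2 → dnI (ED k p q r s) j
      = (2*(k:ℤ)+3-(j:ℤ))*((p:ℤ)+q) + 2*r + (2*(k:ℤ)+4-(j:ℤ))*s := by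
    intro j h6 hle
    rw [dnI_ED k p q r s hk]
    have hx : expD k p q r s j = (2*k+3-j)*(p+q) + 2*r + (2*k+4-j)*s := by
      unfold expD
      rw [if_neg (by omega), if_neg (by omega), if_neg (by omega), if_neg (by omega),
        if_neg (by omega), if_neg (by omega), if_pos (by omega)]
    rw [hx]
    have u1 : ((2*k+3-j:ℕ):ℤ) = 2*(k:ℤ)+3-(j:ℤ) := by omega
    have u2 : ((2*k+4-j:ℕ):ℤ) = 2*(k:ℤ)+4-(j:ℤ) := by omega
    push_cast [u1, u2]; ring
  rcases (by omega : m = 0 ∨ m = 1 ∨ m = 2 ∨ m = 3 ∨ (4 ≤ m ∧ m ≤ 2*k-2) ∨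
      (m = 2*k-1 ∧ 4 ≤ m)) with h|h|h|h|h|h
  · subst h
    simp only [if_neg (show ¬((0:ℕ) = 1) by omega), if_neg (show ¬((0:ℕ) = 2) by omega),
      if_neg (show ¬((0:ℕ) = 2*k-1) by omega), if_pos (show (0:ℕ) = 0 from rfl),
      if_neg (show ¬((0:ℕ) = 3) by omega), if_neg (show ¬((0:ℕ) = 4) by omega),
      if_neg (show ¬(7 ≤ 0+2 ∧ 0+2 < 2*k+3) by omega),
      if_neg (show ¬(7 ≤ 0+3 ∧ 0+3 < 2*k+3) by omega),
      if_neg (show ¬(7 ≤ 0+4 ∧ 0+4 < 2*k+3) by omega),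
      eq_self_iff_true, true_or, or_true, if_true, mul_zero, mul_one, add_zero, zero_add]
    rw [z3, z4, z5, zv 6 (by omega) (by omega)]
    push_cast
    ring
  · subst h
    simp only [if_pos (show (1:ℕ) = 1 from rfl), if_neg (show ¬((1:ℕ) = 2) by omega),
      if_neg (show ¬((1:ℕ) = 2*k-1) by omega), if_neg (show ¬((1:ℕ) = 0) by omega),
      if_pos (show (1:ℕ) = 1 ∨ (1:ℕ) = 2 ∨ (1:ℕ) = 3 by omega),
      if_neg (show ¬((1:ℕ) = 3) by omega), if_neg (show ¬((1:ℕ) = 4) by omega),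
      if_neg (show ¬(7 ≤ 1+2 ∧ 1+2 < 2*k+3) by omega),
      if_neg (show ¬(7 ≤ 1+3 ∧ 1+3 < 2*k+3) by omega),
      if_neg (show ¬(7 ≤ 1+4 ∧ 1+4 < 2*k+3) by omega),
      eq_self_iff_true, true_or, or_true, if_true, mul_zero, mul_one, add_zero, zero_add]
    rw [z0, z3, z4]
    ring
  · subst h
    simp only [if_neg (show ¬((2:ℕ) = 1) by omega), if_pos (show (2:ℕ) = 2 from rfl),
      if_neg (show ¬((2:ℕ) = 2*k-1) by omega), if_neg (show ¬((2:ℕ) = 0) by omega),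
      if_pos (show (2:ℕ) = 1 ∨ (2:ℕ) = 2 ∨ (2:ℕ) = 3 by omega),
      if_neg (show ¬((2:ℕ) = 3) by omega), if_neg (show ¬((2:ℕ) = 4) by omega),
      if_neg (show ¬(7 ≤ 2+2 ∧ 2+2 < 2*k+3) by omega),
      if_neg (show ¬(7 ≤ 2+3 ∧ 2+3 < 2*k+3) by omega),
      if_neg (show ¬(7 ≤ 2+4 ∧ 2+4 < 2*k+3) by omega),
      eq_self_iff_true, true_or, or_true, if_true, mul_zero, mul_one, add_zero, zero_add]
    rw [z1, z3, z5]
    ring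
  · subst h
    by_cases hk2 : k = 2
    · simp only [if_neg (show ¬((3:ℕ) = 1) by omega), if_neg (show ¬((3:ℕ) = 2) by omega),
        if_pos (show (3:ℕ) = 2*k-1 by omega), if_neg (show ¬((3:ℕ) = 0) by omega),
        if_pos (show (3:ℕ) = 1 ∨ (3:ℕ) = 2 ∨ (3:ℕ) = 3 by omega),
        if_pos (show (3:ℕ) = 3 from rfl), if_neg (show ¬((3:ℕ) = 4) by omega),
        if_neg (show ¬(7 ≤ 3+2 ∧ 3+2 < 2*k+3) by omega),
        if_neg (show ¬(7 ≤ 3+3 ∧ 3+3 < 2*k+3) by omega),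
        if_neg (show ¬(7 ≤ 3+4 ∧ 3+4 < 2*k+3) by omega),
        eq_self_iff_true, true_or, or_true, if_true, mul_zero, mul_one, add_zero, zero_add]
      rw [z2, z3, zv 6 (by omega) (by omega)]
      have : ((k:ℕ):ℤ) = 2 := by omega
      rw [this]
      push_cast
      ring
    · simp only [if_neg (show ¬((3:ℕ) = 1) by omega), if_neg (show ¬((3:ℕ) = 2) by omega),
        if_neg (show ¬((3:ℕ) = 2*k-1) by omega), if_neg (show ¬((3:ℕ) = 0) by omega),
        if_pos (show (3:ℕ) = 1 ∨ (3:ℕ) = 2 ∨ (3:ℕ) = 3 by omega),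
        if_pos (show (3:ℕ) = 3 from rfl), if_neg (show ¬((3:ℕ) = 4) by omega),
        if_neg (show ¬(7 ≤ 3+2 ∧ 3+2 < 2*k+3) by omega),
        if_neg (show ¬(7 ≤ 3+3 ∧ 3+3 < 2*k+3) by omega),
        if_pos (show 7 ≤ 3+4 ∧ 3+4 < 2*k+3 by omega),
        eq_self_iff_true, true_or, or_true, if_true, mul_zero, mul_one, add_zero, zero_add]
      rw [z3, zv 6 (by omega) (by omega), zv (3+4) (by omega) (by omega)]
      push_cast
      ring
  · obtain ⟨h4, hle⟩ := h
    by_cases hm4 : m = 4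
    · subst hm4
      simp only [if_neg (show ¬((4:ℕ) = 1) by omega), if_neg (show ¬((4:ℕ) = 2) by omega),
        if_neg (show ¬((4:ℕ) = 2*k-1) by omega), if_neg (show ¬((4:ℕ) = 0) by omega),
        if_neg (show ¬((4:ℕ) = 1 ∨ (4:ℕ) = 2 ∨ (4:ℕ) = 3) by omega),
        if_neg (show ¬((4:ℕ) = 3) by omega), if_pos (show (4:ℕ) = 4 from rfl),
        if_neg (show ¬(7 ≤ 4+2 ∧ 4+2 < 2*k+3) by omega),
        if_pos (show 7 ≤ 4+3 ∧ 4+3 < 2*k+3 by omega),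
        if_pos (show 7 ≤ 4+4 ∧ 4+4 < 2*k+3 by omega),
        eq_self_iff_true, true_or, or_true, if_true, mul_zero, mul_one, add_zero, zero_add]
      rw [zv 6 (by omega) (by omega), zv (4+3) (by omega) (by omega),
        zv (4+4) (by omega) (by omega)]
      push_cast
      ring
    · simp only [if_neg (show ¬(m = 1) by omega), if_neg (show ¬(m = 2) by omega),
        if_neg (show ¬(m = 2*k-1) by omega), if_neg (show ¬(m = 0) by omega),
        if_neg (show ¬(m = 1 ∨ m = 2 ∨ m = 3) by omega),
        if_neg (show ¬(m = 3) by omega), if_neg (show ¬(m = 4) by omega),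
        if_pos (show 7 ≤ m+2 ∧ m+2 < 2*k+3 by omega),
        if_pos (show 7 ≤ m+3 ∧ m+3 < 2*k+3 by omega),
        if_pos (show 7 ≤ m+4 ∧ m+4 < 2*k+3 by omega),
        eq_self_iff_true, true_or, or_true, if_true, mul_zero, mul_one, add_zero, zero_add]
      rw [zv (m+2) (by omega) (by omega), zv (m+3) (by omega) (by omega),
        zv (m+4) (by omega) (by omega)]
      push_cast
      ring
  · obtain ⟨hml, h4⟩ := h
    subst hml
    simp only [if_neg (show ¬(2*k-1 = 1) by omega), if_neg (show ¬(2*k-1 = 2) by omega),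
      if_pos (show 2*k-1 = 2*k-1 from rfl), if_neg (show ¬(2*k-1 = 0) by omega),
      if_neg (show ¬(2*k-1 = 1 ∨ 2*k-1 = 2 ∨ 2*k-1 = 3) by omega),
      if_neg (show ¬(2*k-1 = 3) by omega), if_neg (show ¬(2*k-1 = 4) by omega),
      if_pos (show 7 ≤ 2*k-1+2 ∧ 2*k-1+2 < 2*k+3 by omega),
      if_pos (show 7 ≤ 2*k-1+3 ∧ 2*k-1+3 < 2*k+3 by omega),
      if_neg (show ¬(7 ≤ 2*k-1+4 ∧ 2*k-1+4 < 2*k+3) by omega),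
      eq_self_iff_true, true_or, or_true, if_true, mul_zero, mul_one, add_zero, zero_add]
    rw [z2, zv (2*k-1+2) (by omega) (by omega), zv (2*k-1+3) (by omega) (by omega)]
    have u1 : ((2*k-1+2:ℕ):ℤ) = 2*(k:ℤ)+1 := by omega
    have u2 : ((2*k-1+3:ℕ):ℤ) = 2*(k:ℤ)+2 := by omega
    rw [u1, u2]
    ring
/-- for `n = 2k` (`k ≥ 2`), the ring of invariants of the torus action on
`S = ℂ[x₁, x₂, x_{2k-1}, y₀, …, y_{2k-1}]` is generated, as a `ℂ`-subalgebra, by the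
four monomials `Z₁`, `Z₂`, `Z₃`, `W`. -/
theorem statement3 (k : ℕ) (hk : 2 ≤ k) :
    invariants (wD (2 * k)) = Algebra.adjoin ℂ {DZ₁ k, DZ₂ k, DZ₃ k, DW k} := by
  apply le_antisymm
  · intro f hf
    have hf' : ∀ d ∈ f.support, ∀ i : Fin (2*k), ∑ v, (d v : ℤ) * wD (2*k) v i = 0 := hf
    rw [← MvPolynomial.support_sum_monomial_coeff f]
    apply Subalgebra.sum_mem
    intro dd hdd
    obtain ⟨p, q, r, s, hd⟩ := solveD k hk dd (hf' dd hdd)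
    have h1 : MvPolynomial.monomial dd (1:ℂ) ∈ Algebra.adjoin ℂ {DZ₁ k, DZ₂ k, DZ₃ k, DW k} := by
      rw [hd, mono_ED k p q r s hk]
      exact mul_mem (mul_mem (mul_mem
        (pow_mem (Algebra.subset_adjoin (by simp)) p)
        (pow_mem (Algebra.subset_adjoin (by simp)) q))
        (pow_mem (Algebra.subset_adjoin (by simp)) r))
        (pow_mem (Algebra.subset_adjoin (by simp)) s)
    have h2 : MvPolynomial.monomial dd (MvPolynomial.coeff dd f)
        = MvPolynomial.C (MvPolynomial.coeff dd f) * MvPolynomial.monomial dd 1 := by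
      rw [MvPolynomial.C_mul_monomial, mul_one]
    rw [h2, ← MvPolynomial.algebraMap_eq]
    exact mul_mem (Subalgebra.algebraMap_mem _ _) h1
  · rw [Algebra.adjoin_le_iff]
    have hxm : ∀ E : Fin (2*k+3) →₀ ℕ,
        (∀ i : Fin (2*k), ∑ v, (E v : ℤ) * wD (2*k) v i = 0) →
        MvPolynomial.monomial E (1:ℂ) ∈ invariants (wD (2*k)) := by
      intro E hE dd hdd i
      have hdE : dd = E := by
        rw [MvPolynomial.support_monomial, if_neg one_ne_zero] at hdd
        exact Finset.mem_singleton.mp hdd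
      subst hdE
      exact hE i
    intro x hx
    simp only [Set.mem_insert_iff, Set.mem_singleton_iff] at hx
    rcases hx with rfl | rfl | rfl | rfl
    · rw [DZ₁_eq k hk]
      exact hxm _ (fun i => EDzero k 1 0 0 0 hk i)
    · rw [DZ₂_eq k hk]
      exact hxm _ (fun i => EDzero k 0 1 0 0 hk i)
    · rw [DZ₃_eq k hk]
      exact hxm _ (fun i => EDzero k 0 0 1 0 hk i)
    · rw [DW_eq k hk]
      exact hxm _ (fun i => EDzero k 0 0 0 1 hk i)
end

section
/- For every integer k ≥ 2, there is an isomorphism of ℂ-algebras ℂ[x, y, z]/(x² + zy² + z^{2k−1}) ≅ ℂ[Z₁, Z₂, Z₃, W]/(W² − Z₁Z₂Z₃, Z₁ + Z₂ + Z₃^{k−1}). In other words, the D_{2k} singularity {x² + zy² + z^{2k−1} = 0} ⊂ ℂ³ is isomorphic to the intersection of the hypersurfaces {W² − Z₁Z₂Z₃ = 0} and {Z₁ + Z₂ + Z₃^{k−1} = 0} in ℂ⁴. -/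
open MvPolynomial

noncomputable def st6F (m : ℕ) (l μ : ℂ) :
    MvPolynomial (Fin 3) ℂ →ₐ[ℂ] MvPolynomial (Fin 4) ℂ :=
  aeval ![X 3, C μ⁻¹ * X 1 + C μ⁻¹ * C (2⁻¹:ℂ) * X 2 ^ (m+1), C l⁻¹ * X 2]

noncomputable def st6G (m : ℕ) (l μ : ℂ) :
    MvPolynomial (Fin 4) ℂ →ₐ[ℂ] MvPolynomial (Fin 3) ℂ :=
  aeval ![-(C μ * X 1) - C (l^(m+1)/2) * X 2 ^ (m+1),
          C μ * X 1 - C (l^(m+1)/2) * X 2 ^ (m+1), C l * X 2, X 0]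

lemma st6_idA (m : ℕ) (l μ : ℂ) (s7 : l⁻¹ * (μ⁻¹)^2 = 1)
    (s8 : (l⁻¹)^(2*m+3) = -((2:ℂ)⁻¹^2)) :
    st6F m l μ (X 0 ^ 2 + X 2 * X 1 ^ 2 + X 2 ^ (2*m+3)) =
      (X 3 ^ 2 - X 0 * X 1 * X 2) + X 1 * X 2 * (X 0 + X 1 + X 2 ^ (m+1)) := by
  have E1 : (C l⁻¹ : MvPolynomial (Fin 4) ℂ) * (C μ⁻¹)^2 = 1 := by
    rw [← C_pow, ← C_mul, s7, C_1]
  have E2 : (C l⁻¹ : MvPolynomial (Fin 4) ℂ)^(2*m+3) = -((C (2⁻¹:ℂ))^2) := by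
    rw [← C_pow, ← C_pow, ← C_neg, s8]
  have E3 : (C (2⁻¹:ℂ) : MvPolynomial (Fin 4) ℂ) * 2 = 1 := by
    rw [show ((2:MvPolynomial (Fin 4) ℂ)) = C (2:ℂ) from (map_ofNat C 2).symm, ← C_mul]
    norm_num
  simp only [st6F, map_add, map_mul, map_pow, aeval_X, aeval_C, algebraMap_eq,
    Matrix.cons_val_zero, Matrix.cons_val_one, Matrix.head_cons,
    Matrix.cons_val_two, Matrix.tail_cons, Matrix.cons_val_three]
  linear_combination (X 2 * X 1^2 + 2*(C (2⁻¹:ℂ) : MvPolynomial (Fin 4) ℂ)*X 1*X 2^(m+2)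
      + (C (2⁻¹:ℂ))^2*X 2^(2*m+3)) * E1
    + (X 1 * X 2^(m+2)) * E3 + X 2^(2*m+3) * E2

lemma st6_C2 {n : ℕ} : ((2:MvPolynomial (Fin n) ℂ)) = C (2:ℂ) := (map_ofNat C 2).symm

lemma st6_idB (m : ℕ) (l μ : ℂ) (s3 : μ^2 * l = 1) (s10 : l * (l^(m+1)/2)^2 = -1) :
    st6G m l μ (X 3 ^ 2 - X 0 * X 1 * X 2) =
      X 0 ^ 2 + X 2 * X 1 ^ 2 + X 2 ^ (2*m+3) := by
  have E4 : (C l : MvPolynomial (Fin 3) ℂ) * (C μ)^2 = 1 := by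
    rw [← C_pow, ← C_mul, mul_comm, s3, C_1]
  have E5 : (C l : MvPolynomial (Fin 3) ℂ) * (C (l^(m+1)/2))^2 = -1 := by
    rw [← C_pow, ← C_mul, s10, C_neg, C_1]
  simp only [st6G, map_add, map_sub, map_mul, map_pow, aeval_X, aeval_C, algebraMap_eq,
    Matrix.cons_val_zero, Matrix.cons_val_one, Matrix.head_cons,
    Matrix.cons_val_two, Matrix.tail_cons, Matrix.cons_val_three]
  linear_combination (X 2 * X 1^2) * E4 - X 2^(2*m+3) * E5

lemma st6_idC (m : ℕ) (l μ : ℂ) :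
    st6G m l μ (X 0 + X 1 + X 2 ^ (m+1)) = 0 := by
  have E6 : (C l : MvPolynomial (Fin 3) ℂ)^(m+1) = 2 * C (l^(m+1)/2) := by
    rw [← C_pow, st6_C2, ← C_mul]
    congr 1; ring
  simp only [st6G, map_add, map_sub, map_mul, map_pow, aeval_X, aeval_C, algebraMap_eq,
    Matrix.cons_val_zero, Matrix.cons_val_one, Matrix.head_cons,
    Matrix.cons_val_two, Matrix.tail_cons, Matrix.cons_val_three]
  linear_combination X 2^(m+1) * E6

section comp
variable (m : ℕ) (l μ : ℂ)

lemma st6_id1 (s2 : μ * μ⁻¹ = 1) (s9 : (l^(m+1)/2) * (l⁻¹)^(m+1) = (2:ℂ)⁻¹) :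
    st6F m l μ (st6G m l μ (X 0)) = X 0 - (X 0 + X 1 + X 2 ^ (m+1)) := by
  have E7 : (C μ : MvPolynomial (Fin 4) ℂ) * C μ⁻¹ = 1 := by rw [← C_mul, s2, C_1]
  have E8 : (C (l^(m+1)/2) : MvPolynomial (Fin 4) ℂ) * (C l⁻¹)^(m+1) = C (2⁻¹:ℂ) := by
    rw [← C_pow, ← C_mul, s9]
  have E3 : (C (2⁻¹:ℂ) : MvPolynomial (Fin 4) ℂ) * 2 = 1 := by
    rw [st6_C2, ← C_mul]; norm_num
  simp only [st6G, st6F, map_add, map_sub, map_neg, map_mul, map_pow, aeval_X, aeval_C, algebraMap_eq,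
    Matrix.cons_val_zero, Matrix.cons_val_one, Matrix.head_cons,
    Matrix.cons_val_two, Matrix.tail_cons, Matrix.cons_val_three]
  linear_combination (-(X 1 + (C (2⁻¹:ℂ) : MvPolynomial (Fin 4) ℂ) * X 2^(m+1))) * E7
    - X 2^(m+1) * E8 - X 2^(m+1) * E3

lemma st6_id2 (s2 : μ * μ⁻¹ = 1) (s9 : (l^(m+1)/2) * (l⁻¹)^(m+1) = (2:ℂ)⁻¹) :
    st6F m l μ (st6G m l μ (X 1)) = X 1 := by
  have E7 : (C μ : MvPolynomial (Fin 4) ℂ) * C μ⁻¹ = 1 := by rw [← C_mul, s2, C_1]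
  have E8 : (C (l^(m+1)/2) : MvPolynomial (Fin 4) ℂ) * (C l⁻¹)^(m+1) = C (2⁻¹:ℂ) := by
    rw [← C_pow, ← C_mul, s9]
  simp only [st6G, st6F, map_add, map_sub, map_neg, map_mul, map_pow, aeval_X, aeval_C, algebraMap_eq,
    Matrix.cons_val_zero, Matrix.cons_val_one, Matrix.head_cons,
    Matrix.cons_val_two, Matrix.tail_cons, Matrix.cons_val_three]
  linear_combination (X 1 + (C (2⁻¹:ℂ) : MvPolynomial (Fin 4) ℂ) * X 2^(m+1)) * E7
    - X 2^(m+1) * E8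

lemma st6_id3 (s1 : l * l⁻¹ = 1) :
    st6F m l μ (st6G m l μ (X 2)) = X 2 := by
  have E9 : (C l : MvPolynomial (Fin 4) ℂ) * C l⁻¹ = 1 := by rw [← C_mul, s1, C_1]
  simp only [st6G, st6F, map_mul, aeval_X, aeval_C, algebraMap_eq,
    Matrix.cons_val_zero, Matrix.cons_val_one, Matrix.head_cons,
    Matrix.cons_val_two, Matrix.tail_cons, Matrix.cons_val_three]
  linear_combination X 2 * E9

lemma st6_id4 : st6F m l μ (st6G m l μ (X 3)) = X 3 := by
  simp [st6G, st6F]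

lemma st6_id5 : st6G m l μ (st6F m l μ (X 0)) = X 0 := by
  simp [st6G, st6F]

lemma st6_id6 (s2 : μ * μ⁻¹ = 1) (s12 : (2:ℂ)⁻¹ * l^(m+1) = l^(m+1)/2) :
    st6G m l μ (st6F m l μ (X 1)) = X 1 := by
  have E7 : (C μ : MvPolynomial (Fin 3) ℂ) * C μ⁻¹ = 1 := by rw [← C_mul, s2, C_1]
  have E10 : (C (2⁻¹:ℂ) : MvPolynomial (Fin 3) ℂ) * (C l)^(m+1) = C (l^(m+1)/2) := by
    rw [← C_pow, ← C_mul, s12]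
  simp only [st6G, st6F, map_add, map_sub, map_neg, map_mul, map_pow, aeval_X, aeval_C, algebraMap_eq,
    Matrix.cons_val_zero, Matrix.cons_val_one, Matrix.head_cons,
    Matrix.cons_val_two, Matrix.tail_cons, Matrix.cons_val_three]
  linear_combination X 1 * E7 + ((C μ⁻¹ : MvPolynomial (Fin 3) ℂ) * X 2^(m+1)) * E10

lemma st6_id7 (s1 : l * l⁻¹ = 1) :
    st6G m l μ (st6F m l μ (X 2)) = X 2 := by
  have E9 : (C l : MvPolynomial (Fin 3) ℂ) * C l⁻¹ = 1 := by rw [← C_mul, s1, C_1]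
  simp only [st6G, st6F, map_mul, aeval_X, aeval_C, algebraMap_eq,
    Matrix.cons_val_zero, Matrix.cons_val_one, Matrix.head_cons,
    Matrix.cons_val_two, Matrix.tail_cons, Matrix.cons_val_three]
  linear_combination X 2 * E9

end comp

theorem statement6_aux (m : ℕ) :
    Nonempty
      ((MvPolynomial (Fin 3) ℂ ⧸
          (Ideal.span {X 0 ^ 2 + X 2 * X 1 ^ 2 + X 2 ^ (2 * m + 3)} :
            Ideal (MvPolynomial (Fin 3) ℂ)))
        ≃ₐ[ℂ]
      (MvPolynomial (Fin 4) ℂ ⧸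
          (Ideal.span {X 3 ^ 2 - X 0 * X 1 * X 2, X 0 + X 1 + X 2 ^ (m + 1)} :
            Ideal (MvPolynomial (Fin 4) ℂ)))) := by
  obtain ⟨l, hl4⟩ := IsAlgClosed.exists_pow_nat_eq (k := ℂ) (-4) (n := 2*m+3) (by omega)
  have hl0 : l ≠ 0 := by
    intro h; rw [h] at hl4; rw [zero_pow (by omega)] at hl4; norm_num at hl4
  obtain ⟨μ, hμ2⟩ := IsAlgClosed.exists_pow_nat_eq (k := ℂ) l⁻¹ (n := 2) (by omega)
  have s1 : l * l⁻¹ = 1 := mul_inv_cancel₀ hl0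
  have hμ0 : μ ≠ 0 := by
    intro h; rw [h] at hμ2; simp only [ne_eq, zero_pow, OfNat.ofNat_ne_zero,
      not_false_iff] at hμ2
    exact hl0 (inv_eq_zero.mp hμ2.symm)
  have s2 : μ * μ⁻¹ = 1 := mul_inv_cancel₀ hμ0
  have s3 : μ^2 * l = 1 := by rw [hμ2]; field_simp
  have s7 : l⁻¹ * (μ⁻¹)^2 = 1 := by
    field_simp
    linear_combination -s3
  have s8 : (l⁻¹)^(2*m+3) = -((2:ℂ)⁻¹^2) := by
    rw [inv_pow, hl4]; norm_num
  have s9 : (l^(m+1)/2) * (l⁻¹)^(m+1) = (2:ℂ)⁻¹ := by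
    rw [inv_pow]; field_simp
  have s10 : l * (l^(m+1)/2)^2 = -1 := by
    field_simp
    linear_combination hl4
  have s12 : (2:ℂ)⁻¹ * l^(m+1) = l^(m+1)/2 := by ring
  -- ideals
  set p : MvPolynomial (Fin 3) ℂ := X 0 ^ 2 + X 2 * X 1 ^ 2 + X 2 ^ (2 * m + 3) with hp
  set f : MvPolynomial (Fin 4) ℂ := X 3 ^ 2 - X 0 * X 1 * X 2 with hf
  set g : MvPolynomial (Fin 4) ℂ := X 0 + X 1 + X 2 ^ (m + 1) with hg
  set I : Ideal (MvPolynomial (Fin 3) ℂ) := Ideal.span {p} with hI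
  set J : Ideal (MvPolynomial (Fin 4) ℂ) := Ideal.span {f, g} with hJ
  have hfJ : f ∈ J := Ideal.subset_span (Set.mem_insert _ _)
  have hgJ : g ∈ J := Ideal.subset_span (Set.mem_insert_of_mem _ rfl)
  have hpI : p ∈ I := Ideal.subset_span rfl
  have hFp : st6F m l μ p ∈ J := by
    rw [hp, st6_idA m l μ s7 s8]
    exact add_mem hfJ (Ideal.mul_mem_left _ _ hgJ)
  have hGf : st6G m l μ f = p := st6_idB m l μ s3 s10
  have hGg : st6G m l μ g = 0 := st6_idC m l μ
  set F0 : MvPolynomial (Fin 3) ℂ →ₐ[ℂ] (MvPolynomial (Fin 4) ℂ ⧸ J) :=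
    (Ideal.Quotient.mkₐ ℂ J).comp (st6F m l μ) with hF0
  set G0 : MvPolynomial (Fin 4) ℂ →ₐ[ℂ] (MvPolynomial (Fin 3) ℂ ⧸ I) :=
    (Ideal.Quotient.mkₐ ℂ I).comp (st6G m l μ) with hG0
  have hF0z : ∀ a ∈ I, F0 a = 0 := by
    intro a ha
    obtain ⟨q, rfl⟩ := Ideal.mem_span_singleton'.mp ha
    simp only [hF0, AlgHom.comp_apply, map_mul, Ideal.Quotient.mkₐ_eq_mk]
    rw [(Ideal.Quotient.eq_zero_iff_mem).mpr hFp, mul_zero]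
  have hG0z : ∀ a ∈ J, G0 a = 0 := by
    intro a ha
    obtain ⟨u, v, rfl⟩ := Ideal.mem_span_pair.mp ha
    simp only [hG0, AlgHom.comp_apply, map_add, map_mul, Ideal.Quotient.mkₐ_eq_mk]
    rw [hGf, hGg, map_zero, mul_zero, add_zero,
      (Ideal.Quotient.eq_zero_iff_mem).mpr hpI, mul_zero]
  set Fbar := Ideal.Quotient.liftₐ I F0 hF0z with hFbar
  set Gbar := Ideal.Quotient.liftₐ J G0 hG0z with hGbar
  have hFmk : ∀ y, Fbar (Ideal.Quotient.mk I y) = Ideal.Quotient.mk J (st6F m l μ y) := by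
    intro y
    rw [hFbar, Ideal.Quotient.liftₐ_apply]
    rfl
  have hGmk : ∀ y, Gbar (Ideal.Quotient.mk J y) = Ideal.Quotient.mk I (st6G m l μ y) := by
    intro y
    rw [hGbar, Ideal.Quotient.liftₐ_apply]
    rfl
  have hcomp1 : Fbar.comp Gbar = AlgHom.id ℂ _ := by
    apply Ideal.Quotient.algHom_ext
    apply MvPolynomial.algHom_ext
    intro i
    simp only [AlgHom.comp_apply, Ideal.Quotient.mkₐ_eq_mk, AlgHom.id_apply]
    fin_cases i
    · show Fbar (Gbar (Ideal.Quotient.mk J (X 0))) = Ideal.Quotient.mk J (X 0)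
      rw [hGmk, hFmk, st6_id1 m l μ s2 s9, map_sub,
        (Ideal.Quotient.eq_zero_iff_mem).mpr hgJ, sub_zero]
    · show Fbar (Gbar (Ideal.Quotient.mk J (X 1))) = Ideal.Quotient.mk J (X 1)
      rw [hGmk, hFmk, st6_id2 m l μ s2 s9]
    · show Fbar (Gbar (Ideal.Quotient.mk J (X 2))) = Ideal.Quotient.mk J (X 2)
      rw [hGmk, hFmk, st6_id3 m l μ s1]
    · show Fbar (Gbar (Ideal.Quotient.mk J (X 3))) = Ideal.Quotient.mk J (X 3)
      rw [hGmk, hFmk, st6_id4 m l μ]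
  have hcomp2 : Gbar.comp Fbar = AlgHom.id ℂ _ := by
    apply Ideal.Quotient.algHom_ext
    apply MvPolynomial.algHom_ext
    intro i
    simp only [AlgHom.comp_apply, Ideal.Quotient.mkₐ_eq_mk, AlgHom.id_apply]
    fin_cases i
    · show Gbar (Fbar (Ideal.Quotient.mk I (X 0))) = Ideal.Quotient.mk I (X 0)
      rw [hFmk, hGmk, st6_id5 m l μ]
    · show Gbar (Fbar (Ideal.Quotient.mk I (X 1))) = Ideal.Quotient.mk I (X 1)
      rw [hFmk, hGmk, st6_id6 m l μ s2 s12]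
    · show Gbar (Fbar (Ideal.Quotient.mk I (X 2))) = Ideal.Quotient.mk I (X 2)
      rw [hFmk, hGmk, st6_id7 m l μ s1]
  exact ⟨AlgEquiv.ofAlgHom Fbar Gbar hcomp1 hcomp2⟩

/-- the `D_{2k}` singularity `{x² + zy² + z^{2k-1} = 0} ⊂ ℂ³` is isomorphic
to the intersection `{W² - Z₁Z₂Z₃ = 0} ∩ {Z₁ + Z₂ + Z₃^{k-1} = 0} ⊂ ℂ⁴`: their
coordinate rings are isomorphic as `ℂ`-algebras.  (Here `x, y, z` are `X 0, X 1, X 2`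
and `Z₁, Z₂, Z₃, W` are `X 0, X 1, X 2, X 3`.) -/
theorem statement6 (k : ℕ) (hk : 2 ≤ k) :
    Nonempty
      ((MvPolynomial (Fin 3) ℂ ⧸
          (Ideal.span {X 0 ^ 2 + X 2 * X 1 ^ 2 + X 2 ^ (2 * k - 1)} :
            Ideal (MvPolynomial (Fin 3) ℂ)))
        ≃ₐ[ℂ]
      (MvPolynomial (Fin 4) ℂ ⧸
          (Ideal.span {X 3 ^ 2 - X 0 * X 1 * X 2, X 0 + X 1 + X 2 ^ (k - 1)} :
            Ideal (MvPolynomial (Fin 4) ℂ)))) := by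
  obtain ⟨m, rfl⟩ : ∃ m, k = m + 2 := ⟨k - 2, by omega⟩
  rw [show 2 * (m + 2) - 1 = 2 * m + 3 by omega, show (m + 2) - 1 = m + 1 by omega]
  exact statement6_aux m
end

section
/- For every integer k ≥ 2, the set C = {(a, b, c) ∈ ℤ³ : a ≥ 0, b ≥ 0, c ≥ 0, a + (2k+1)b − 2c ≥ 0, and 2c − (2k−1)b − a ≥ 0} is an additive submonoid of ℤ³, and it is generated as an additive monoid by the six elements (2, 0, 1), (0, 1, k), (0, 2, 2k−1), (0, 2, 2k+1), (1, 1, k), and (1, 1, k+1). -/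
private lemma aux7 (k : ℕ) (hk : 2 ≤ k) : ∀ n : ℕ, ∀ a b c : ℤ, b.natAbs = n →
    0 ≤ a → 0 ≤ b → 0 ≤ c → 0 ≤ a + (2 * (k : ℤ) + 1) * b - 2 * c →
    0 ≤ 2 * c - (2 * (k : ℤ) - 1) * b - a →
    (a, b, c) ∈ AddSubmonoid.closure
        ({((2 : ℤ), (0 : ℤ), (1 : ℤ)), (0, 1, (k : ℤ)), (0, 2, 2 * (k : ℤ) - 1),
          (0, 2, 2 * (k : ℤ) + 1), (1, 1, (k : ℤ)), (1, 1, (k : ℤ) + 1)} :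
          Set (ℤ × ℤ × ℤ)) := by
  intro n
  induction n using Nat.strong_induction_on with
  | _ n ih =>
    intro a b c hn ha hb hc h1 h2
    have hK : (2:ℤ) ≤ (k:ℤ) := by exact_mod_cast hk
    rcases eq_or_lt_of_le hb with hb0 | hb1
    · -- b = 0, a = 2c
      have hb0' : b = 0 := hb0.symm
      subst hb0'
      have hle : a ≤ 2 * c := by linarith
      have hge : 2 * c ≤ a := by linarith
      have : (a, (0:ℤ), c) = c.toNat • (((2:ℤ), (0:ℤ), (1:ℤ)) : ℤ × ℤ × ℤ) := by
        simp [Prod.ext_iff, nsmul_eq_mul]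
        omega
      rw [this]
      exact nsmul_mem (AddSubmonoid.subset_closure (Set.mem_insert _ _)) _
    · -- b ≥ 1
      have hb1' : 1 ≤ b := hb1
      have step : ∀ g1 g2 g3 : ℤ, ((g1, g2, g3) : ℤ × ℤ × ℤ) ∈ ({((2 : ℤ), (0 : ℤ), (1 : ℤ)), (0, 1, (k : ℤ)), (0, 2, 2 * (k : ℤ) - 1),
          (0, 2, 2 * (k : ℤ) + 1), (1, 1, (k : ℤ)), (1, 1, (k : ℤ) + 1)} : Set (ℤ × ℤ × ℤ)) →
          0 ≤ a - g1 → 0 ≤ b - g2 → b - g2 < b → 0 ≤ c - g3 →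
          0 ≤ (a - g1) + (2 * (k : ℤ) + 1) * (b - g2) - 2 * (c - g3) →
          0 ≤ 2 * (c - g3) - (2 * (k : ℤ) - 1) * (b - g2) - (a - g1) →
          (a, b, c) ∈ AddSubmonoid.closure
            ({((2 : ℤ), (0 : ℤ), (1 : ℤ)), (0, 1, (k : ℤ)), (0, 2, 2 * (k : ℤ) - 1),
              (0, 2, 2 * (k : ℤ) + 1), (1, 1, (k : ℤ)), (1, 1, (k : ℤ) + 1)} :
              Set (ℤ × ℤ × ℤ)) := by
        intro g1 g2 g3 hg h1' h2' h3' h4' h5' h6'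
        have hmem := ih (b - g2).natAbs (by omega) (a - g1) (b - g2) (c - g3)
          rfl h1' h2' h4' h5' h6'
        have heq : (a, b, c) = (a - g1, b - g2, c - g3) + (g1, g2, g3) := by
          simp [Prod.ext_iff]
        rw [heq]
        exact AddSubmonoid.add_mem _ hmem (AddSubmonoid.subset_closure hg)
      have hmul1 : (2 * (k:ℤ) - 1) * 1 ≤ (2 * (k:ℤ) - 1) * b :=
        mul_le_mul_of_nonneg_left hb1' (by linarith)
      rcases lt_or_ge 0 (a + (2 * (k : ℤ) + 1) * b - 2 * c) with hu1 | hu0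
      · rcases lt_or_ge 0 (2 * c - (2 * (k : ℤ) - 1) * b - a) with hv1 | hv0
        · -- subtract (0,1,k)
          have hck : (k:ℤ) ≤ c := by linarith
          exact step 0 1 (k:ℤ) (by simp) (by linarith) (by linarith) (by linarith)
            (by linarith) (by linarith) (by linarith)
        · have hv0' : 2 * c - (2 * (k : ℤ) - 1) * b - a = 0 := by linarith
          rcases eq_or_lt_of_le hb1' with hb1e | hb2
          · -- b = 1, subtract (1,1,k)
            have hb1e' : b = 1 := hb1e.symm
            subst hb1e'
            have hae : a = 2 * c - 2 * (k:ℤ) + 1 := by linarith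
            have ha1 : 1 ≤ a := by omega
            have hck : (k:ℤ) ≤ c := by omega
            exact step 1 1 (k:ℤ) (by simp) (by linarith) (by linarith) (by linarith)
              (by linarith) (by linarith) (by linarith)
          · -- b ≥ 2, subtract (0,2,2k-1)
            have hb2' : (2:ℤ) ≤ b := hb2
            have hmul2 : (2 * (k:ℤ) - 1) * 2 ≤ (2 * (k:ℤ) - 1) * b :=
              mul_le_mul_of_nonneg_left hb2' (by linarith)
            exact step 0 2 (2 * (k:ℤ) - 1) (by simp) (by linarith) (by linarith)
              (by linarith) (by linarith) (by linarith) (by linarith)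
      · have hu0' : a + (2 * (k : ℤ) + 1) * b - 2 * c = 0 := by linarith
        rcases eq_or_lt_of_le hb1' with hb1e | hb2
        · -- b = 1, subtract (1,1,k+1)
          have hb1e' : b = 1 := hb1e.symm
          subst hb1e'
          have hae : a = 2 * c - 2 * (k:ℤ) - 1 := by linarith
          have ha1 : 1 ≤ a := by omega
          have hck : (k:ℤ) + 1 ≤ c := by omega
          exact step 1 1 ((k:ℤ) + 1) (by simp) (by linarith) (by linarith) (by linarith)
            (by linarith) (by linarith) (by linarith)
        · -- b ≥ 2, subtract (0,2,2k+1)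
          have hb2' : (2:ℤ) ≤ b := hb2
          have hmul2 : (2 * (k:ℤ) + 1) * 2 ≤ (2 * (k:ℤ) + 1) * b :=
            mul_le_mul_of_nonneg_left hb2' (by linarith)
          exact step 0 2 (2 * (k:ℤ) + 1) (by simp) (by linarith) (by linarith)
            (by linarith) (by linarith) (by linarith) (by linarith)

/-- for `k ≥ 2`, the set
`C = {(a,b,c) ∈ ℤ³ : a ≥ 0, b ≥ 0, c ≥ 0, a + (2k+1)b - 2c ≥ 0, 2c - (2k-1)b - a ≥ 0}`
is an additive submonoid of `ℤ³` generated by `(2,0,1)`, `(0,1,k)`, `(0,2,2k-1)`,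
`(0,2,2k+1)`, `(1,1,k)` and `(1,1,k+1)`; equivalently, membership in the additive
monoid closure of these six elements is characterised exactly by the defining
inequalities of `C`. -/
theorem statement7 (k : ℕ) (hk : 2 ≤ k) (p : ℤ × ℤ × ℤ) :
    p ∈ AddSubmonoid.closure
        ({((2 : ℤ), (0 : ℤ), (1 : ℤ)), (0, 1, (k : ℤ)), (0, 2, 2 * (k : ℤ) - 1),
          (0, 2, 2 * (k : ℤ) + 1), (1, 1, (k : ℤ)), (1, 1, (k : ℤ) + 1)} :
          Set (ℤ × ℤ × ℤ)) ↔
      0 ≤ p.1 ∧ 0 ≤ p.2.1 ∧ 0 ≤ p.2.2 ∧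
        0 ≤ p.1 + (2 * (k : ℤ) + 1) * p.2.1 - 2 * p.2.2 ∧
        0 ≤ 2 * p.2.2 - (2 * (k : ℤ) - 1) * p.2.1 - p.1 := by
  have hK : (2:ℤ) ≤ (k:ℤ) := by exact_mod_cast hk
  constructor
  · intro hp
    induction hp using AddSubmonoid.closure_induction with
    | mem x hx =>
      rcases hx with h | h | h | h | h | h <;> subst h <;>
        refine ⟨by norm_num, by norm_num, by simp only; linarith, by simp only; linarith,
          by simp only; linarith⟩
    | zero => norm_num
    | add x y hx hy ihx ihy =>
      obtain ⟨hx1, hx2, hx3, hx4, hx5⟩ := ihx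
      obtain ⟨hy1, hy2, hy3, hy4, hy5⟩ := ihy
      simp only [Prod.fst_add, Prod.snd_add] at *
      exact ⟨by linarith, by linarith, by linarith, by linarith, by linarith⟩
  · rintro ⟨h1, h2, h3, h4, h5⟩
    have := aux7 k hk p.2.1.natAbs p.1 p.2.1 p.2.2 rfl h1 h2 h3 h4 h5
    simpa using this
end

section
/- Let k ≥ 2 and n = 2k+1. The invariant ring Sᵀ (the ℂ-subalgebra of S = ℂ[x₁, x₂, x_{2k}, y₀, y₁, …, y_{2k}] consisting of all polynomials each of whose monomials has ℤ^{2k+1}-weight 0) equals the ℂ-subalgebra generated by the six monomials Z₁ = x_{2k}² y₀² y₁ y₂ ∏_{j=3}^{2k} y_j², Z₂ = x₁ x₂ y₀^{2k−1} y₁^{k} y₂^{k} ∏_{j=3}^{2k} y_j^{2k+1−j}, Z₃ = x₂² x_{2k} y₀^{2k} y₁^{k} y₂^{k+1} ∏_{j=3}^{2k} y_j^{2k+2−j}, Z₄ = x₁² x_{2k} y₀^{2k} y₁^{k+1} y₂^{k} ∏_{j=3}^{2k} y_j^{2k+2−j}, Z₅ = x₂⁴ y₀^{4k−2} y₁^{2k−1}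 y₂^{2k+1} ∏_{j=3}^{2k} y_j^{4k+2−2j}, and Z₆ = x₁⁴ y₀^{4k−2} y₁^{2k+1} y₂^{2k−1} ∏_{j=3}^{2k} y_j^{4k+2−2j}. -/
open MvPolynomial

/-- The invariant monomial `Z₁ = x_{2k}² y₀² y₁ y₂ ∏_{j=3}^{2k} y_j²`. -/
noncomputable def OZ₁ (k : ℕ) : MvPolynomial (Fin (2 * k + 1 + 3)) ℂ :=
  vD (2 * k + 1) 2 ^ 2 * vD (2 * k + 1) 3 ^ 2 * vD (2 * k + 1) 4 * vD (2 * k + 1) 5 *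
    ∏ j ∈ Finset.Icc 3 (2 * k), vD (2 * k + 1) (j + 3) ^ 2

/-- The invariant monomial `Z₂ = x₁ x₂ y₀^{2k-1} y₁^k y₂^k ∏_{j=3}^{2k} y_j^{2k+1-j}`. -/
noncomputable def OZ₂ (k : ℕ) : MvPolynomial (Fin (2 * k + 1 + 3)) ℂ :=
  vD (2 * k + 1) 0 * vD (2 * k + 1) 1 * vD (2 * k + 1) 3 ^ (2 * k - 1) *
      vD (2 * k + 1) 4 ^ k * vD (2 * k + 1) 5 ^ k *
    ∏ j ∈ Finset.Icc 3 (2 * k), vD (2 * k + 1) (j + 3) ^ (2 * k + 1 - j)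

/-- The invariant monomial `Z₃ = x₂² x_{2k} y₀^{2k} y₁^k y₂^{k+1} ∏_{j=3}^{2k} y_j^{2k+2-j}`. -/
noncomputable def OZ₃ (k : ℕ) : MvPolynomial (Fin (2 * k + 1 + 3)) ℂ :=
  vD (2 * k + 1) 1 ^ 2 * vD (2 * k + 1) 2 * vD (2 * k + 1) 3 ^ (2 * k) *
      vD (2 * k + 1) 4 ^ k * vD (2 * k + 1) 5 ^ (k + 1) *
    ∏ j ∈ Finset.Icc 3 (2 * k), vD (2 * k + 1) (j + 3) ^ (2 * k + 2 - j)

/-- The invariant monomial `Z₄ = x₁² x_{2k} y₀^{2k} y₁^{k+1} y₂^k ∏_{j=3}^{2k} y_j^{2k+2-j}`. -/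
noncomputable def OZ₄ (k : ℕ) : MvPolynomial (Fin (2 * k + 1 + 3)) ℂ :=
  vD (2 * k + 1) 0 ^ 2 * vD (2 * k + 1) 2 * vD (2 * k + 1) 3 ^ (2 * k) *
      vD (2 * k + 1) 4 ^ (k + 1) * vD (2 * k + 1) 5 ^ k *
    ∏ j ∈ Finset.Icc 3 (2 * k), vD (2 * k + 1) (j + 3) ^ (2 * k + 2 - j)

/-- The invariant monomial `Z₅ = x₂⁴ y₀^{4k-2} y₁^{2k-1} y₂^{2k+1} ∏_{j=3}^{2k} y_j^{4k+2-2j}`. -/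
noncomputable def OZ₅ (k : ℕ) : MvPolynomial (Fin (2 * k + 1 + 3)) ℂ :=
  vD (2 * k + 1) 1 ^ 4 * vD (2 * k + 1) 3 ^ (4 * k - 2) * vD (2 * k + 1) 4 ^ (2 * k - 1) *
      vD (2 * k + 1) 5 ^ (2 * k + 1) *
    ∏ j ∈ Finset.Icc 3 (2 * k), vD (2 * k + 1) (j + 3) ^ (4 * k + 2 - 2 * j)

/-- The invariant monomial `Z₆ = x₁⁴ y₀^{4k-2} y₁^{2k+1} y₂^{2k-1} ∏_{j=3}^{2k} y_j^{4k+2-2j}`. -/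
noncomputable def OZ₆ (k : ℕ) : MvPolynomial (Fin (2 * k + 1 + 3)) ℂ :=
  vD (2 * k + 1) 0 ^ 4 * vD (2 * k + 1) 3 ^ (4 * k - 2) * vD (2 * k + 1) 4 ^ (2 * k + 1) *
      vD (2 * k + 1) 5 ^ (2 * k - 1) *
    ∏ j ∈ Finset.Icc 3 (2 * k), vD (2 * k + 1) (j + 3) ^ (4 * k + 2 - 2 * j)

namespace St8
open MvPolynomial Finsupp

/-- index into `Fin (2*k+1+3)` -/
def fi (k : ℕ) (a : ℕ) : Fin (2 * k + 1 + 3) := ⟨a % (2 * k + 1 + 3), Nat.mod_lt a (by omega)⟩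

lemma fi_val (k a : ℕ) (h : a < 2 * k + 1 + 3) : (fi k a : ℕ) = a := Nat.mod_eq_of_lt h

lemma fi_inj (k a b : ℕ) (ha : a < 2 * k + 1 + 3) (hb : b < 2 * k + 1 + 3) :
    fi k a = fi k b ↔ a = b := by
  rw [Fin.ext_iff, fi_val k a ha, fi_val k b hb]

/-- exponent of variable `a` in the exponent vector `d`. -/
def dd (k : ℕ) (d : Fin (2 * k + 1 + 3) →₀ ℕ) (a : ℕ) : ℕ := d (fi k a)

lemma vD_pow (k a e : ℕ) :
    vD (2 * k + 1) a ^ e = monomial (Finsupp.single (fi k a) e) (1 : ℂ) :=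
  X_pow_eq_monomial

lemma vD_one (k a : ℕ) :
    vD (2 * k + 1) a = monomial (Finsupp.single (fi k a) 1) (1 : ℂ) := by
  rw [← pow_one (vD (2 * k + 1) a), vD_pow]

lemma prod_monomial_one {σ : Type*} (F : Finset ℕ) (g : ℕ → (σ →₀ ℕ)) :
    (∏ j ∈ F, monomial (g j) (1 : ℂ)) = monomial (∑ j ∈ F, g j) 1 := by
  induction F using Finset.cons_induction with
  | empty => simp
  | cons a s ha ih => rw [Finset.prod_cons, ih, Finset.sum_cons, monomial_mul, one_mul]

end St8
namespace St8
open MvPolynomial Finsupp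

/-- generic exponent vector builder matching the shape of the `OZ` monomials -/
noncomputable def mkD (k : ℕ) (e0 e1 e2 e3 e4 e5 : ℕ) (g : ℕ → ℕ) : Fin (2 * k + 1 + 3) →₀ ℕ :=
  Finsupp.single (fi k 0) e0 + Finsupp.single (fi k 1) e1 + Finsupp.single (fi k 2) e2 +
    Finsupp.single (fi k 3) e3 + Finsupp.single (fi k 4) e4 + Finsupp.single (fi k 5) e5 +
    ∑ j ∈ Finset.Icc 3 (2 * k), Finsupp.single (fi k (j + 3)) (g j)

lemma single_fi_apply (k a e t : ℕ) (ha : a < 2 * k + 1 + 3) (ht : t < 2 * k + 1 + 3) :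
    (Finsupp.single (fi k a) e) (fi k t) = if t = a then e else 0 := by
  rw [Finsupp.single_apply]
  by_cases h : t = a
  · subst h; rw [if_pos rfl, if_pos rfl]
  · rw [if_neg h, if_neg]
    rw [fi_inj k a t ha ht]
    omega

lemma dd_mkD (k : ℕ) (hk : 2 ≤ k) (e0 e1 e2 e3 e4 e5 : ℕ) (g : ℕ → ℕ) (t : ℕ) (ht : t < 2 * k + 1 + 3) :
    dd k (mkD k e0 e1 e2 e3 e4 e5 g) t =
      (if t = 0 then e0 else 0) + (if t = 1 then e1 else 0) + (if t = 2 then e2 else 0) +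
      (if t = 3 then e3 else 0) + (if t = 4 then e4 else 0) + (if t = 5 then e5 else 0) +
      (if 6 ≤ t ∧ t ≤ 2 * k + 3 then g (t - 3) else 0) := by
  have hsum : (∑ j ∈ Finset.Icc 3 (2 * k), Finsupp.single (fi k (j + 3)) (g j)) (fi k t)
      = if 6 ≤ t ∧ t ≤ 2 * k + 3 then g (t - 3) else 0 := by
    rw [Finsupp.finset_sum_apply]
    rw [Finset.sum_congr rfl (fun j hj => ?_), Finset.sum_ite_eq' (Finset.Icc 3 (2 * k)) (t - 3) g]
    · simp only [Finset.mem_Icc]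
      congr 1
      simp only [eq_iff_iff]
      omega
    · rw [Finset.mem_Icc] at hj
      rw [Finsupp.single_apply]
      congr 1
      simp only [eq_iff_iff]
      rw [fi_inj k (j + 3) t (by omega) ht]
      omega
  have s0 := single_fi_apply k 0 e0 t (by omega) ht
  have s1 := single_fi_apply k 1 e1 t (by omega) ht
  have s2 := single_fi_apply k 2 e2 t (by omega) ht
  have s3 := single_fi_apply k 3 e3 t (by omega) ht
  have s4 := single_fi_apply k 4 e4 t (by omega) ht
  have s5 := single_fi_apply k 5 e5 t (by omega) ht
  simp only [dd, mkD, Finsupp.add_apply, hsum, s0, s1, s2, s3, s4, s5]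

/-- exponent vectors of the six generators -/
noncomputable def D1 (k : ℕ) := mkD k 0 0 2 2 1 1 (fun _ => 2)
noncomputable def D2 (k : ℕ) := mkD k 1 1 0 (2 * k - 1) k k (fun j => 2 * k + 1 - j)
noncomputable def D3 (k : ℕ) := mkD k 0 2 1 (2 * k) k (k + 1) (fun j => 2 * k + 2 - j)
noncomputable def D4 (k : ℕ) := mkD k 2 0 1 (2 * k) (k + 1) k (fun j => 2 * k + 2 - j)
noncomputable def D5 (k : ℕ) := mkD k 0 4 0 (4 * k - 2) (2 * k - 1) (2 * k + 1) (fun j => 4 * k + 2 - 2 * j)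
noncomputable def D6 (k : ℕ) := mkD k 4 0 0 (4 * k - 2) (2 * k + 1) (2 * k - 1) (fun j => 4 * k + 2 - 2 * j)

lemma OZ1_eq (k : ℕ) : OZ₁ k = monomial (D1 k) 1 := by
  rw [OZ₁, vD_pow k 2, vD_pow k 3, vD_one k 4, vD_one k 5]
  simp only [vD_pow]
  rw [prod_monomial_one]
  simp only [monomial_mul, one_mul]
  rw [D1, mkD]
  congr 2
  simp only [Finsupp.single_zero, zero_add, add_zero]
  all_goals abel

lemma OZ2_eq (k : ℕ) : OZ₂ k = monomial (D2 k) 1 := by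
  rw [OZ₂, vD_one k 0, vD_one k 1, vD_pow k 3, vD_pow k 4, vD_pow k 5]
  simp only [vD_pow]
  rw [prod_monomial_one]
  simp only [monomial_mul, one_mul]
  rw [D2, mkD]
  congr 2
  simp only [Finsupp.single_zero, zero_add, add_zero]
  all_goals abel

lemma OZ3_eq (k : ℕ) : OZ₃ k = monomial (D3 k) 1 := by
  rw [OZ₃, vD_pow k 1, vD_one k 2, vD_pow k 3, vD_pow k 4, vD_pow k 5]
  simp only [vD_pow]
  rw [prod_monomial_one]
  simp only [monomial_mul, one_mul]
  rw [D3, mkD]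
  congr 2
  simp only [Finsupp.single_zero, zero_add, add_zero]
  all_goals abel

lemma OZ4_eq (k : ℕ) : OZ₄ k = monomial (D4 k) 1 := by
  rw [OZ₄, vD_pow k 0, vD_one k 2, vD_pow k 3, vD_pow k 4, vD_pow k 5]
  simp only [vD_pow]
  rw [prod_monomial_one]
  simp only [monomial_mul, one_mul]
  rw [D4, mkD]
  congr 2
  simp only [Finsupp.single_zero, zero_add, add_zero]
  all_goals abel

lemma OZ5_eq (k : ℕ) : OZ₅ k = monomial (D5 k) 1 := by
  rw [OZ₅, vD_pow k 1, vD_pow k 3, vD_pow k 4, vD_pow k 5]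
  simp only [vD_pow]
  rw [prod_monomial_one]
  simp only [monomial_mul, one_mul]
  rw [D5, mkD]
  congr 2
  simp only [Finsupp.single_zero, zero_add, add_zero]
  all_goals abel

lemma OZ6_eq (k : ℕ) : OZ₆ k = monomial (D6 k) 1 := by
  rw [OZ₆, vD_pow k 0, vD_pow k 3, vD_pow k 4, vD_pow k 5]
  simp only [vD_pow]
  rw [prod_monomial_one]
  simp only [monomial_mul, one_mul]
  rw [D6, mkD]
  congr 2
  simp only [Finsupp.single_zero, zero_add, add_zero]
  all_goals abel

end St8
namespace St8
open MvPolynomial Finsupp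

lemma fi_coe (k : ℕ) (v : Fin (2 * k + 1 + 3)) : fi k (v : ℕ) = v :=
  Fin.ext (fi_val k _ v.isLt)

lemma weight_sum (k : ℕ) (hk : 2 ≤ k) (d : Fin (2 * k + 1 + 3) →₀ ℕ)
    (t : ℕ) (ht : t < 2 * k + 1) :
    ∑ v, (d v : ℤ) * wD (2 * k + 1) v ⟨t, ht⟩ =
      (dd k d 0 : ℤ) * (if t = 1 then 1 else 0)
      + (dd k d 1 : ℤ) * (if t = 2 then 1 else 0)
      + (dd k d 2 : ℤ) * (if t = 2 * k then 1 else 0)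
      + (dd k d 3 : ℤ) * (if t = 0 then -2 else if t = 1 ∨ t = 2 ∨ t = 3 then 1 else 0)
      + (dd k d 4 : ℤ) * (if t = 0 then 1 else if t = 1 then -2 else 0)
      + (dd k d 5 : ℤ) * (if t = 0 then 1 else if t = 2 then -2 else 0)
      + (dd k d 6 : ℤ) *
          ((if t = 0 then 1 else 0) + (if t = 3 then -2 else 0) + (if t = 4 then 1 else 0))
      + (if 3 ≤ t ∧ t + 1 ≤ 2 * k then (dd k d (t + 4) : ℤ) else 0)
      + (if 4 ≤ t then -2 * (dd k d (t + 3) : ℤ) else 0)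
      + (if 5 ≤ t then (dd k d (t + 2) : ℤ) else 0) := by
  set g : ℕ → ℤ := fun a => (dd k d a : ℤ) * wD (2 * k + 1) (fi k a) ⟨t, ht⟩ with hg
  have key : ∀ v : Fin (2 * k + 1 + 3), (d v : ℤ) * wD (2 * k + 1) v ⟨t, ht⟩ = g (v : ℕ) := by
    intro v
    simp only [hg, dd, fi_coe]
  rw [Finset.sum_congr rfl (fun v _ => key v), Fin.sum_univ_eq_sum_range g (2 * k + 1 + 3),
    Finset.range_eq_Ico, ← Finset.sum_Ico_consecutive g (Nat.zero_le 7) (by omega),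
    ← Finset.range_eq_Ico]
  have htail : ∀ a ∈ Finset.Ico 7 (2 * k + 1 + 3), g a =
      ((if a = t + 4 then (dd k d a : ℤ) else 0) + (if a = t + 3 then -2 * (dd k d a : ℤ) else 0))
        + (if a = t + 2 then (dd k d a : ℤ) else 0) := by
    intro a ha
    rw [Finset.mem_Ico] at ha
    have hv : ((fi k a : Fin (2 * k + 1 + 3)) : ℕ) = a := fi_val k a ha.2
    simp only [hg, wD, hv]
    rw [if_neg (by omega), if_neg (by omega), if_neg (by omega), if_neg (by omega),
      if_neg (by omega), if_neg (by omega), if_neg (by omega)]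
    by_cases h1 : a = t + 4
    · rw [if_pos (show (⟨t, ht⟩ : Fin (2 * k + 1)).val = a - 4 by simp; omega),
        if_neg (show ¬(⟨t, ht⟩ : Fin (2 * k + 1)).val = a - 3 by simp; omega),
        if_neg (show ¬(⟨t, ht⟩ : Fin (2 * k + 1)).val = a - 2 by simp; omega),
        if_pos h1, if_neg (by omega), if_neg (by omega)]
      ring
    · by_cases h2 : a = t + 3
      · rw [if_neg (show ¬(⟨t, ht⟩ : Fin (2 * k + 1)).val = a - 4 by simp; omega),
          if_pos (show (⟨t, ht⟩ : Fin (2 * k + 1)).val = a - 3 by simp; omega),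
          if_neg (show ¬(⟨t, ht⟩ : Fin (2 * k + 1)).val = a - 2 by simp; omega),
          if_neg h1, if_pos h2, if_neg (by omega)]
        ring
      · by_cases h3 : a = t + 2
        · rw [if_neg (show ¬(⟨t, ht⟩ : Fin (2 * k + 1)).val = a - 4 by simp; omega),
            if_neg (show ¬(⟨t, ht⟩ : Fin (2 * k + 1)).val = a - 3 by simp; omega),
            if_pos (show (⟨t, ht⟩ : Fin (2 * k + 1)).val = a - 2 by simp; omega),
            if_neg h1, if_neg h2, if_pos h3]
          ring
        · rw [if_neg (show ¬(⟨t, ht⟩ : Fin (2 * k + 1)).val = a - 4 by simp; omega),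
            if_neg (show ¬(⟨t, ht⟩ : Fin (2 * k + 1)).val = a - 3 by simp; omega),
            if_neg (show ¬(⟨t, ht⟩ : Fin (2 * k + 1)).val = a - 2 by simp; omega),
            if_neg h1, if_neg h2, if_neg h3]
          ring
  rw [Finset.sum_congr rfl htail, Finset.sum_add_distrib, Finset.sum_add_distrib,
    Finset.sum_ite_eq' (Finset.Ico 7 (2 * k + 1 + 3)) (t + 4) (fun a => (dd k d a : ℤ)),
    Finset.sum_ite_eq' (Finset.Ico 7 (2 * k + 1 + 3)) (t + 3) (fun a => -2 * (dd k d a : ℤ)),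
    Finset.sum_ite_eq' (Finset.Ico 7 (2 * k + 1 + 3)) (t + 2) (fun a => (dd k d a : ℤ))]
  simp only [Finset.mem_Ico]
  rw [if_congr (show (7 ≤ t + 4 ∧ t + 4 < 2 * k + 1 + 3) ↔ (3 ≤ t ∧ t + 1 ≤ 2 * k) by omega) rfl rfl,
    if_congr (show (7 ≤ t + 3 ∧ t + 3 < 2 * k + 1 + 3) ↔ (4 ≤ t) by omega) rfl rfl,
    if_congr (show (7 ≤ t + 2 ∧ t + 2 < 2 * k + 1 + 3) ↔ (5 ≤ t) by omega) rfl rfl]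
  simp only [Finset.sum_range_succ, Finset.sum_range_zero, zero_add, hg, wD,
    fi_val k 0 (by omega), fi_val k 1 (by omega), fi_val k 2 (by omega), fi_val k 3 (by omega),
    fi_val k 4 (by omega), fi_val k 5 (by omega), fi_val k 6 (by omega)]
  norm_num
  ring

end St8
namespace St8
open MvPolynomial Finsupp

/-- the system of linear equations on exponent vectors equivalent to weight-zero. -/
def Eqs (k : ℕ) (d : Fin (2 * k + 1 + 3) →₀ ℕ) : Prop :=
  (dd k d 4 + dd k d 5 + dd k d 6 = 2 * dd k d 3) ∧
  (dd k d 0 + dd k d 3 = 2 * dd k d 4) ∧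
  (dd k d 1 + dd k d 3 = 2 * dd k d 5) ∧
  (dd k d 3 + dd k d 7 = 2 * dd k d 6) ∧
  (∀ t, 4 ≤ t → t + 1 ≤ 2 * k → dd k d (t + 2) + dd k d (t + 4) = 2 * dd k d (t + 3)) ∧
  (dd k d 2 + dd k d (2 * k + 2) = 2 * dd k d (2 * k + 3))

lemma ws0 (k : ℕ) (hk : 2 ≤ k) (d : Fin (2 * k + 1 + 3) →₀ ℕ) (h : (0:ℕ) < 2 * k + 1) :
    ∑ v, (d v : ℤ) * wD (2 * k + 1) v ⟨0, h⟩ =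
      -2 * (dd k d 3 : ℤ) + (dd k d 4 : ℤ) + (dd k d 5 : ℤ) + (dd k d 6 : ℤ) := by
  rw [weight_sum k hk d 0 h]
  have c : ¬((0:ℕ) = 2 * k) := by omega
  simp [c]
  ring

lemma ws1 (k : ℕ) (hk : 2 ≤ k) (d : Fin (2 * k + 1 + 3) →₀ ℕ) (h : (1:ℕ) < 2 * k + 1) :
    ∑ v, (d v : ℤ) * wD (2 * k + 1) v ⟨1, h⟩ =
      (dd k d 0 : ℤ) + (dd k d 3 : ℤ) - 2 * (dd k d 4 : ℤ) := by
  rw [weight_sum k hk d 1 h]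
  have c : ¬((1:ℕ) = 2 * k) := by omega
  simp [c]
  ring

lemma ws2 (k : ℕ) (hk : 2 ≤ k) (d : Fin (2 * k + 1 + 3) →₀ ℕ) (h : (2:ℕ) < 2 * k + 1) :
    ∑ v, (d v : ℤ) * wD (2 * k + 1) v ⟨2, h⟩ =
      (dd k d 1 : ℤ) + (dd k d 3 : ℤ) - 2 * (dd k d 5 : ℤ) := by
  rw [weight_sum k hk d 2 h]
  have c : ¬((2:ℕ) = 2 * k) := by omega
  simp [c]
  ring

lemma ws3 (k : ℕ) (hk : 2 ≤ k) (d : Fin (2 * k + 1 + 3) →₀ ℕ) (h : (3:ℕ) < 2 * k + 1) :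
    ∑ v, (d v : ℤ) * wD (2 * k + 1) v ⟨3, h⟩ =
      (dd k d 3 : ℤ) - 2 * (dd k d 6 : ℤ) + (dd k d 7 : ℤ) := by
  rw [weight_sum k hk d 3 h]
  have c : ¬((3:ℕ) = 2 * k) := by omega
  have c2 : 3 ≤ 3 ∧ 3 + 1 ≤ 2 * k := by omega
  simp [c, c2]
  ring

lemma wsm (k : ℕ) (hk : 2 ≤ k) (d : Fin (2 * k + 1 + 3) →₀ ℕ) (t : ℕ) (h4 : 4 ≤ t)
    (hu : t + 1 ≤ 2 * k) (h : t < 2 * k + 1) :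
    ∑ v, (d v : ℤ) * wD (2 * k + 1) v ⟨t, h⟩ =
      (dd k d (t + 2) : ℤ) - 2 * (dd k d (t + 3) : ℤ) + (dd k d (t + 4) : ℤ) := by
  rw [weight_sum k hk d t h]
  have c0 : ¬(t = 0) := by omega
  have c1 : ¬(t = 1) := by omega
  have c2 : ¬(t = 2) := by omega
  have c3 : ¬(t = 3) := by omega
  have ck : ¬(t = 2 * k) := by omega
  have cor : ¬(t = 1 ∨ t = 2 ∨ t = 3) := by omega
  have cg : 3 ≤ t ∧ t + 1 ≤ 2 * k := by omega
  by_cases ht4 : t = 4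
  · subst ht4
    have cg5 : (5:ℕ) ≤ 2 * k := by omega
    norm_num [ck]
    rw [if_pos cg5] <;> try rw [if_pos (show (5:ℕ) ≤ k * 2 by omega)]
    ring
  · have c5 : 5 ≤ t := by omega
    simp [c0, c1, c2, c3, ck, cor, cg, ht4, c5, h4]
    ring

lemma wsn (k : ℕ) (hk : 2 ≤ k) (d : Fin (2 * k + 1 + 3) →₀ ℕ) (h : 2 * k < 2 * k + 1) :
    ∑ v, (d v : ℤ) * wD (2 * k + 1) v ⟨2 * k, h⟩ =
      (dd k d 2 : ℤ) + (dd k d (2 * k + 2) : ℤ) - 2 * (dd k d (2 * k + 3) : ℤ) := by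
  rw [weight_sum k hk d (2 * k) h]
  have c0 : ¬(2 * k = 0) := by omega
  have c1 : ¬(2 * k = 1) := by omega
  have c2 : ¬(2 * k = 2) := by omega
  have c3 : ¬(2 * k = 3) := by omega
  have cor : ¬(2 * k = 1 ∨ 2 * k = 2 ∨ 2 * k = 3) := by omega
  have cg : ¬(3 ≤ 2 * k ∧ 2 * k + 1 ≤ 2 * k) := by omega
  have c4' : 4 ≤ 2 * k := by omega
  by_cases hk2 : k = 2
  · subst hk2
    norm_num
    ring
  · have c4 : ¬(2 * k = 4) := by omega
    have c5 : 5 ≤ 2 * k := by omega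
    simp [c0, c1, c2, c3, cor, cg, c4, c5, c4']
    ring

lemma invariant_iff (k : ℕ) (hk : 2 ≤ k) (d : Fin (2 * k + 1 + 3) →₀ ℕ) :
    (∀ i : Fin (2 * k + 1), ∑ v, (d v : ℤ) * wD (2 * k + 1) v i = 0) ↔ Eqs k d := by
  constructor
  · intro h
    refine ⟨?_, ?_, ?_, ?_, fun t h4 hu => ?_, ?_⟩
    · have := h ⟨0, by omega⟩; rw [ws0 k hk d] at this; omega
    · have := h ⟨1, by omega⟩; rw [ws1 k hk d] at this; omega
    · have := h ⟨2, by omega⟩; rw [ws2 k hk d] at this; omega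
    · have := h ⟨3, by omega⟩; rw [ws3 k hk d] at this; omega
    · have := h ⟨t, by omega⟩; rw [wsm k hk d t h4 hu] at this; omega
    · have := h ⟨2 * k, by omega⟩; rw [wsn k hk d] at this; omega
  · rintro ⟨e0, e1, e2, e3, em, en⟩ ⟨t, ht⟩
    have hcase : t = 0 ∨ t = 1 ∨ t = 2 ∨ t = 3 ∨ (4 ≤ t ∧ t + 1 ≤ 2 * k) ∨ t = 2 * k := by
      omega
    rcases hcase with rfl | rfl | rfl | rfl | ⟨h4, hu⟩ | rfl
    · rw [ws0 k hk d]; omega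
    · rw [ws1 k hk d]; omega
    · rw [ws2 k hk d]; omega
    · rw [ws3 k hk d]; omega
    · rw [wsm k hk d t h4 hu]; have := em t h4 hu; omega
    · rw [wsn k hk d]; omega

end St8
namespace St8

lemma num (k : ℕ) (hk : 2 ≤ k) : ∀ (e : ℕ) (b0 b1 b2 : ℤ), 0 ≤ b1 → 0 ≤ b2 →
    b1 + b2 = b0 + e → b0 ≤ 2 * b1 → b0 ≤ 2 * b2 → (2 * (k:ℤ) - 1) * e ≤ b0 →
    ∃ c1 c2 c3 c4 c5 c6 : ℕ,
      b0 = 2 * c1 + (2 * (k:ℤ) - 1) * c2 + 2 * k * c3 + 2 * k * c4 + (4 * k - 2) * c5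
            + (4 * k - 2) * c6 ∧
      b1 = c1 + k * c2 + k * c3 + (k + 1) * c4 + (2 * k - 1) * c5 + (2 * k + 1) * c6 ∧
      b2 = c1 + k * c2 + (k + 1) * c3 + k * c4 + (2 * k + 1) * c5 + (2 * k - 1) * c6 ∧
      (e : ℤ) = c2 + c3 + c4 + 2 * c5 + 2 * c6 := by
  intro e
  induction e using Nat.strong_induction_on with
  | _ e IH =>
  intro b0 b1 b2 hb1 hb2 h1 h2 h3 h4
  have hkz : (3:ℤ) ≤ 2 * (k:ℤ) - 1 := by
    have : (2:ℤ) ≤ (k:ℤ) := by exact_mod_cast hk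
    linarith
  rcases Nat.eq_zero_or_pos e with he | he
  · subst he
    refine ⟨b1.toNat, 0, 0, 0, 0, 0, ?_, ?_, ?_, ?_⟩ <;>
      · push_cast [Int.toNat_of_nonneg hb1] at h1 ⊢
        try linarith
  · -- e ≥ 1
    have he1 : (1:ℤ) ≤ (e:ℤ) := by exact_mod_cast he
    have hke : (2 * (k:ℤ) - 1) * 1 ≤ (2 * (k:ℤ) - 1) * e :=
      mul_le_mul_of_nonneg_left he1 (by linarith)
    rcases eq_or_lt_of_le h2 with hb1e | hb1s
    · -- b0 = 2 * b1
      rcases eq_or_lt_of_le h4 with hee | hes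
      · -- (2k-1)e = b0 : use Z5
        have heven : Even ((2 * (k:ℤ) - 1) * e) := ⟨b1, by linarith⟩
        rcases Int.even_mul.mp heven with hodd | hev
        · exfalso; rcases hodd with ⟨m, hm⟩; omega
        · have he2 : 2 ≤ e := by rcases hev with ⟨m, hm⟩; omega
          have he2' : (2:ℤ) ≤ (e:ℤ) := by exact_mod_cast he2
          have hke2 : (2 * (k:ℤ) - 1) * 2 ≤ (2 * (k:ℤ) - 1) * e :=
            mul_le_mul_of_nonneg_left he2' (by linarith)
          have hcast : ((e - 2 : ℕ) : ℤ) = (e:ℤ) - 2 := by omega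
          have rid : (2 * (k:ℤ) - 1) * ((e:ℤ) - 2)
              = (2 * (k:ℤ) - 1) * e - 2 * (2 * (k:ℤ) - 1) := by ring
          obtain ⟨c1, c2, c3, c4, c5, c6, g0, g1, g2, g3⟩ :=
            IH (e - 2) (by omega) (b0 - (4 * k - 2)) (b1 - (2 * k - 1)) (b2 - (2 * k + 1))
              (by push_cast; linarith) (by push_cast; linarith)
              (by rw [hcast]; push_cast; linarith)
              (by push_cast; linarith) (by push_cast; linarith)
              (by rw [hcast]; push_cast; linarith)
          rw [hcast] at g3
          refine ⟨c1, c2, c3, c4, c5 + 1, c6, ?_, ?_, ?_, ?_⟩ <;>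
            · push_cast at g0 g1 g2 g3 ⊢
              linarith
      · -- (2k-1)e < b0 : use Z3
        have hcast : ((e - 1 : ℕ) : ℤ) = (e:ℤ) - 1 := by omega
        have rid : (2 * (k:ℤ) - 1) * ((e:ℤ) - 1)
            = (2 * (k:ℤ) - 1) * e - (2 * (k:ℤ) - 1) := by ring
        obtain ⟨c1, c2, c3, c4, c5, c6, g0, g1, g2, g3⟩ :=
          IH (e - 1) (by omega) (b0 - 2 * k) (b1 - k) (b2 - (k + 1))
            (by push_cast; linarith) (by push_cast; linarith)
            (by rw [hcast]; push_cast; linarith)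
            (by push_cast; linarith) (by push_cast; linarith)
            (by rw [hcast]; push_cast; linarith)
        rw [hcast] at g3
        refine ⟨c1, c2, c3 + 1, c4, c5, c6, ?_, ?_, ?_, ?_⟩ <;>
          · push_cast at g0 g1 g2 g3 ⊢
            linarith
    · rcases eq_or_lt_of_le h3 with hb2e | hb2s
      · -- b0 = 2 * b2
        rcases eq_or_lt_of_le h4 with hee | hes
        · -- (2k-1)e = b0 : use Z6
          have heven : Even ((2 * (k:ℤ) - 1) * e) := ⟨b2, by linarith⟩
          rcases Int.even_mul.mp heven with hodd | hev
          · exfalso; rcases hodd with ⟨m, hm⟩; omega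
          · have he2 : 2 ≤ e := by rcases hev with ⟨m, hm⟩; omega
            have he2' : (2:ℤ) ≤ (e:ℤ) := by exact_mod_cast he2
            have hke2 : (2 * (k:ℤ) - 1) * 2 ≤ (2 * (k:ℤ) - 1) * e :=
              mul_le_mul_of_nonneg_left he2' (by linarith)
            have hcast : ((e - 2 : ℕ) : ℤ) = (e:ℤ) - 2 := by omega
            have rid : (2 * (k:ℤ) - 1) * ((e:ℤ) - 2)
                = (2 * (k:ℤ) - 1) * e - 2 * (2 * (k:ℤ) - 1) := by ring
            obtain ⟨c1, c2, c3, c4, c5, c6, g0, g1, g2, g3⟩ :=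
              IH (e - 2) (by omega) (b0 - (4 * k - 2)) (b1 - (2 * k + 1)) (b2 - (2 * k - 1))
                (by push_cast; linarith) (by push_cast; linarith)
                (by rw [hcast]; push_cast; linarith)
                (by push_cast; linarith) (by push_cast; linarith)
                (by rw [hcast]; push_cast; linarith)
            rw [hcast] at g3
            refine ⟨c1, c2, c3, c4, c5, c6 + 1, ?_, ?_, ?_, ?_⟩ <;>
              · push_cast at g0 g1 g2 g3 ⊢
                linarith
        · -- (2k-1)e < b0 : use Z4
          have hcast : ((e - 1 : ℕ) : ℤ) = (e:ℤ) - 1 := by omega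
          have rid : (2 * (k:ℤ) - 1) * ((e:ℤ) - 1)
              = (2 * (k:ℤ) - 1) * e - (2 * (k:ℤ) - 1) := by ring
          obtain ⟨c1, c2, c3, c4, c5, c6, g0, g1, g2, g3⟩ :=
            IH (e - 1) (by omega) (b0 - 2 * k) (b1 - (k + 1)) (b2 - k)
              (by push_cast; linarith) (by push_cast; linarith)
              (by rw [hcast]; push_cast; linarith)
              (by push_cast; linarith) (by push_cast; linarith)
              (by rw [hcast]; push_cast; linarith)
          rw [hcast] at g3
          refine ⟨c1, c2, c3, c4 + 1, c5, c6, ?_, ?_, ?_, ?_⟩ <;>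
            · push_cast at g0 g1 g2 g3 ⊢
              linarith
      · -- both strict : use Z2
        have hcast : ((e - 1 : ℕ) : ℤ) = (e:ℤ) - 1 := by omega
        have rid : (2 * (k:ℤ) - 1) * ((e:ℤ) - 1)
            = (2 * (k:ℤ) - 1) * e - (2 * (k:ℤ) - 1) := by ring
        obtain ⟨c1, c2, c3, c4, c5, c6, g0, g1, g2, g3⟩ :=
          IH (e - 1) (by omega) (b0 - (2 * k - 1)) (b1 - k) (b2 - k)
            (by push_cast; linarith) (by push_cast; linarith)
            (by rw [hcast]; push_cast; linarith)
            (by push_cast; linarith) (by push_cast; linarith)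
            (by rw [hcast]; push_cast; linarith)
        rw [hcast] at g3
        refine ⟨c1, c2 + 1, c3, c4, c5, c6, ?_, ?_, ?_, ?_⟩ <;>
          · push_cast at g0 g1 g2 g3 ⊢
            linarith

end St8
namespace St8
open MvPolynomial Finsupp

lemma mkD_apply (k : ℕ) (hk : 2 ≤ k) (e0 e1 e2 e3 e4 e5 : ℕ) (g : ℕ → ℕ) (t : ℕ)
    (ht : t < 2 * k + 1 + 3) :
    (mkD k e0 e1 e2 e3 e4 e5 g) (fi k t) =
      (if t = 0 then e0 else 0) + (if t = 1 then e1 else 0) + (if t = 2 then e2 else 0) +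
      (if t = 3 then e3 else 0) + (if t = 4 then e4 else 0) + (if t = 5 then e5 else 0) +
      (if 6 ≤ t ∧ t ≤ 2 * k + 3 then g (t - 3) else 0) :=
  dd_mkD k hk e0 e1 e2 e3 e4 e5 g t ht

lemma decomp (k : ℕ) (hk : 2 ≤ k) (d : Fin (2 * k + 1 + 3) →₀ ℕ) (hE : Eqs k d) :
    ∃ c1 c2 c3 c4 c5 c6 : ℕ,
      d = c1 • D1 k + c2 • D2 k + c3 • D3 k + c4 • D4 k + c5 • D5 k + c6 • D6 k := by
  obtain ⟨e0, e1, e2, e3, em, en⟩ := hE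
  have hb3 : dd k d 6 ≤ dd k d 3 := by omega
  set E : ℕ := dd k d 3 - dd k d 6 with hEdef
  have hE6 : dd k d 6 + E = dd k d 3 := by omega
  -- the chain of y-exponents
  have hch : ∀ i : ℕ, 3 + i ≤ 2 * k → dd k d (i + 6) + (i + 1) * E = dd k d 3 := by
    intro i
    induction i using Nat.strong_induction_on with
    | _ i IH =>
    intro hi
    match i, hi with
    | 0, hi => simpa using hE6
    | 1, hi =>
      have h3 := e3
      norm_num
      omega
    | (i+2), hi =>
      have h1 := IH (i + 1) (by omega) (by omega)
      have h2 := IH i (by omega) (by omega)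
      have h3 := em (i + 4) (by omega) (by omega)
      rw [show i + 1 + 6 = i + 7 by omega, show i + 1 + 1 = i + 2 by omega] at h1
      rw [show i + 4 + 2 = i + 6 by omega, show i + 4 + 4 = i + 8 by omega,
        show i + 4 + 3 = i + 7 by omega] at h3
      rw [show i + 2 + 6 = i + 8 by omega, show i + 2 + 1 = i + 3 by omega]
      have p1 : (i + 3) * E = (i + 2) * E + E := by ring
      have p2 : (i + 2) * E = (i + 1) * E + E := by ring
      linarith [h1, h2, h3, p1, p2]
  have hA := hch (2 * k - 4) (by omega)
  have hB := hch (2 * k - 3) (by omega)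
  rw [show 2 * k - 4 + 6 = 2 * k + 2 by omega, show 2 * k - 4 + 1 = 2 * k - 3 by omega] at hA
  rw [show 2 * k - 3 + 6 = 2 * k + 3 by omega, show 2 * k - 3 + 1 = 2 * k - 2 by omega] at hB
  have ha3 : dd k d 2 + (2 * k - 1) * E = dd k d 3 := by
    have p1 : (2 * k - 1) * E = (2 * k - 3) * E + 2 * E := by
      rw [show 2 * k - 1 = (2 * k - 3) + 2 by omega]; ring
    have p2 : (2 * k - 2) * E = (2 * k - 3) * E + E := by
      rw [show 2 * k - 2 = (2 * k - 3) + 1 by omega]; ring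
    linarith [en, hA, hB, p1, p2]
  have ha3z : (dd k d 2 : ℤ) + (2 * (k:ℤ) - 1) * (E : ℤ) = (dd k d 3 : ℤ) := by
    zify [show 1 ≤ 2 * k by omega] at ha3
    exact_mod_cast ha3
  have e1z : (dd k d 0 : ℤ) + (dd k d 3 : ℤ) = 2 * (dd k d 4 : ℤ) := by exact_mod_cast e1
  have e2z : (dd k d 1 : ℤ) + (dd k d 3 : ℤ) = 2 * (dd k d 5 : ℤ) := by exact_mod_cast e2
  obtain ⟨c1, c2, c3, c4, c5, c6, g0, g1, g2, g3⟩ :=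
    num k hk E (dd k d 3 : ℤ) (dd k d 4 : ℤ) (dd k d 5 : ℤ)
      (Int.natCast_nonneg _) (Int.natCast_nonneg _)
      (by omega) (by omega) (by omega)
      (by linarith [ha3z, Int.natCast_nonneg (dd k d 2)])
  refine ⟨c1, c2, c3, c4, c5, c6, ?_⟩
  ext v
  obtain ⟨t, ht⟩ := v
  have hv : fi k t = (⟨t, ht⟩ : Fin (2 * k + 1 + 3)) := Fin.ext (fi_val k t ht)
  rw [← hv]
  simp only [Finsupp.coe_add, Pi.add_apply, Finsupp.smul_apply, smul_eq_mul,
    D1, D2, D3, D4, D5, D6,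
    mkD_apply k hk _ _ _ _ _ _ _ t ht]
  have hddv : d (fi k t) = dd k d t := rfl
  rw [hddv]
  have hcase : t = 0 ∨ t = 1 ∨ t = 2 ∨ t = 3 ∨ t = 4 ∨ t = 5 ∨ (6 ≤ t ∧ t ≤ 2 * k + 3) := by
    omega
  rcases hcase with rfl | rfl | rfl | rfl | rfl | rfl | ⟨h6, hub⟩
  · norm_num
    zify
    linear_combination e1z + 2 * g1 - g0
  · norm_num
    zify
    linear_combination e2z + 2 * g2 - g0
  · norm_num
    zify
    linear_combination ha3z + g0 - (2 * (k:ℤ) - 1) * g3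
  · norm_num
    zify [show 1 ≤ 2 * k by omega, show 2 ≤ 4 * k by omega]
    linear_combination g0
  · norm_num
    zify [show 1 ≤ 2 * k by omega]
    linear_combination g1
  · norm_num
    zify [show 1 ≤ 2 * k by omega]
    linear_combination g2
  · have hcc := hch (t - 6) (by omega)
    rw [show t - 6 + 6 = t by omega, show t - 6 + 1 = t - 5 by omega] at hcc
    have hccz : (dd k d t : ℤ) + ((t:ℤ) - 5) * (E : ℤ) = (dd k d 3 : ℤ) := by
      zify [show 5 ≤ t by omega] at hcc
      exact_mod_cast hcc
    have c0 : ¬(t = 0) := by omega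
    have c1' : ¬(t = 1) := by omega
    have c2' : ¬(t = 2) := by omega
    have c3' : ¬(t = 3) := by omega
    have c4' : ¬(t = 4) := by omega
    have c5' : ¬(t = 5) := by omega
    have cg : 6 ≤ t ∧ t ≤ 2 * k + 3 := ⟨h6, hub⟩
    simp only [if_neg c0, if_neg c1', if_neg c2', if_neg c3', if_neg c4', if_neg c5',
      if_pos cg, zero_add, add_zero]
    zify [show t - 3 ≤ 2 * k + 1 by omega, show t - 3 ≤ 2 * k + 2 by omega,
      show 2 * (t - 3) ≤ 4 * k + 2 by omega, show 3 ≤ t by omega]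
    linear_combination hccz + g0 - ((t:ℤ) - 5) * g3
  done

end St8
namespace St8
open MvPolynomial Finsupp

lemma dd_mkD_big (k : ℕ) (hk : 2 ≤ k) (e0 e1 e2 e3 e4 e5 : ℕ) (g : ℕ → ℕ) (t : ℕ)
    (h6 : 6 ≤ t) (hub : t ≤ 2 * k + 3) :
    dd k (mkD k e0 e1 e2 e3 e4 e5 g) t = g (t - 3) := by
  rw [dd_mkD k hk e0 e1 e2 e3 e4 e5 g t (by omega)]
  rw [if_neg (by omega), if_neg (by omega), if_neg (by omega), if_neg (by omega),
    if_neg (by omega), if_neg (by omega), if_pos ⟨h6, hub⟩]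
  simp

lemma Eqs_D1 (k : ℕ) (hk : 2 ≤ k) : Eqs k (D1 k) := by
  rw [show D1 k = mkD k 0 0 2 2 1 1 (fun _ => 2) from rfl]
  have B := dd_mkD_big k hk 0 0 2 2 1 1 (fun _ => 2)
  have S := dd_mkD k hk 0 0 2 2 1 1 (fun _ => 2)
  refine ⟨?_, ?_, ?_, ?_, fun t h4t hut => ?_, ?_⟩
  · rw [S 4 (by omega), S 5 (by omega), B 6 (by omega) (by omega), S 3 (by omega)]; norm_num
  · rw [S 0 (by omega), S 3 (by omega), S 4 (by omega)]; norm_num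
  · rw [S 1 (by omega), S 3 (by omega), S 5 (by omega)]; norm_num
  · rw [S 3 (by omega), B 7 (by omega) (by omega), B 6 (by omega) (by omega)]; norm_num
  · rw [B (t + 2) (by omega) (by omega), B (t + 4) (by omega) (by omega),
      B (t + 3) (by omega) (by omega)]
  · rw [S 2 (by omega), B (2 * k + 2) (by omega) (by omega), B (2 * k + 3) (by omega) (by omega)]
    norm_num

lemma Eqs_D2 (k : ℕ) (hk : 2 ≤ k) : Eqs k (D2 k) := by
  rw [show D2 k = mkD k 1 1 0 (2 * k - 1) k k (fun j => 2 * k + 1 - j) from rfl]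
  have B := dd_mkD_big k hk 1 1 0 (2 * k - 1) k k (fun j => 2 * k + 1 - j)
  have S := dd_mkD k hk 1 1 0 (2 * k - 1) k k (fun j => 2 * k + 1 - j)
  refine ⟨?_, ?_, ?_, ?_, fun t h4t hut => ?_, ?_⟩
  · rw [S 4 (by omega), S 5 (by omega), B 6 (by omega) (by omega), S 3 (by omega)]
    norm_num <;> omega
  · rw [S 0 (by omega), S 3 (by omega), S 4 (by omega)]; norm_num <;> omega
  · rw [S 1 (by omega), S 3 (by omega), S 5 (by omega)]; norm_num <;> omega
  · rw [S 3 (by omega), B 7 (by omega) (by omega), B 6 (by omega) (by omega)]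
    norm_num <;> omega
  · rw [B (t + 2) (by omega) (by omega), B (t + 4) (by omega) (by omega),
      B (t + 3) (by omega) (by omega)]
    norm_num <;> omega
  · rw [S 2 (by omega), B (2 * k + 2) (by omega) (by omega), B (2 * k + 3) (by omega) (by omega)]
    norm_num <;> omega

lemma Eqs_D3 (k : ℕ) (hk : 2 ≤ k) : Eqs k (D3 k) := by
  rw [show D3 k = mkD k 0 2 1 (2 * k) k (k + 1) (fun j => 2 * k + 2 - j) from rfl]
  have B := dd_mkD_big k hk 0 2 1 (2 * k) k (k + 1) (fun j => 2 * k + 2 - j)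
  have S := dd_mkD k hk 0 2 1 (2 * k) k (k + 1) (fun j => 2 * k + 2 - j)
  refine ⟨?_, ?_, ?_, ?_, fun t h4t hut => ?_, ?_⟩
  · rw [S 4 (by omega), S 5 (by omega), B 6 (by omega) (by omega), S 3 (by omega)]
    norm_num <;> omega
  · rw [S 0 (by omega), S 3 (by omega), S 4 (by omega)]; norm_num <;> omega
  · rw [S 1 (by omega), S 3 (by omega), S 5 (by omega)]; norm_num <;> omega
  · rw [S 3 (by omega), B 7 (by omega) (by omega), B 6 (by omega) (by omega)]
    norm_num <;> omega
  · rw [B (t + 2) (by omega) (by omega), B (t + 4) (by omega) (by omega),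
      B (t + 3) (by omega) (by omega)]
    norm_num <;> omega
  · rw [S 2 (by omega), B (2 * k + 2) (by omega) (by omega), B (2 * k + 3) (by omega) (by omega)]
    norm_num <;> omega

lemma Eqs_D4 (k : ℕ) (hk : 2 ≤ k) : Eqs k (D4 k) := by
  rw [show D4 k = mkD k 2 0 1 (2 * k) (k + 1) k (fun j => 2 * k + 2 - j) from rfl]
  have B := dd_mkD_big k hk 2 0 1 (2 * k) (k + 1) k (fun j => 2 * k + 2 - j)
  have S := dd_mkD k hk 2 0 1 (2 * k) (k + 1) k (fun j => 2 * k + 2 - j)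
  refine ⟨?_, ?_, ?_, ?_, fun t h4t hut => ?_, ?_⟩
  · rw [S 4 (by omega), S 5 (by omega), B 6 (by omega) (by omega), S 3 (by omega)]
    norm_num <;> omega
  · rw [S 0 (by omega), S 3 (by omega), S 4 (by omega)]; norm_num <;> omega
  · rw [S 1 (by omega), S 3 (by omega), S 5 (by omega)]; norm_num <;> omega
  · rw [S 3 (by omega), B 7 (by omega) (by omega), B 6 (by omega) (by omega)]
    norm_num <;> omega
  · rw [B (t + 2) (by omega) (by omega), B (t + 4) (by omega) (by omega),
      B (t + 3) (by omega) (by omega)]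
    norm_num <;> omega
  · rw [S 2 (by omega), B (2 * k + 2) (by omega) (by omega), B (2 * k + 3) (by omega) (by omega)]
    norm_num <;> omega

lemma Eqs_D5 (k : ℕ) (hk : 2 ≤ k) : Eqs k (D5 k) := by
  rw [show D5 k = mkD k 0 4 0 (4 * k - 2) (2 * k - 1) (2 * k + 1) (fun j => 4 * k + 2 - 2 * j)
    from rfl]
  have B := dd_mkD_big k hk 0 4 0 (4 * k - 2) (2 * k - 1) (2 * k + 1) (fun j => 4 * k + 2 - 2 * j)
  have S := dd_mkD k hk 0 4 0 (4 * k - 2) (2 * k - 1) (2 * k + 1) (fun j => 4 * k + 2 - 2 * j)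
  refine ⟨?_, ?_, ?_, ?_, fun t h4t hut => ?_, ?_⟩
  · rw [S 4 (by omega), S 5 (by omega), B 6 (by omega) (by omega), S 3 (by omega)]
    norm_num <;> omega
  · rw [S 0 (by omega), S 3 (by omega), S 4 (by omega)]; norm_num <;> omega
  · rw [S 1 (by omega), S 3 (by omega), S 5 (by omega)]; norm_num <;> omega
  · rw [S 3 (by omega), B 7 (by omega) (by omega), B 6 (by omega) (by omega)]
    norm_num <;> omega
  · rw [B (t + 2) (by omega) (by omega), B (t + 4) (by omega) (by omega),
      B (t + 3) (by omega) (by omega)]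
    norm_num <;> omega
  · rw [S 2 (by omega), B (2 * k + 2) (by omega) (by omega), B (2 * k + 3) (by omega) (by omega)]
    norm_num <;> omega

lemma Eqs_D6 (k : ℕ) (hk : 2 ≤ k) : Eqs k (D6 k) := by
  rw [show D6 k = mkD k 4 0 0 (4 * k - 2) (2 * k + 1) (2 * k - 1) (fun j => 4 * k + 2 - 2 * j)
    from rfl]
  have B := dd_mkD_big k hk 4 0 0 (4 * k - 2) (2 * k + 1) (2 * k - 1) (fun j => 4 * k + 2 - 2 * j)
  have S := dd_mkD k hk 4 0 0 (4 * k - 2) (2 * k + 1) (2 * k - 1) (fun j => 4 * k + 2 - 2 * j)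
  refine ⟨?_, ?_, ?_, ?_, fun t h4t hut => ?_, ?_⟩
  · rw [S 4 (by omega), S 5 (by omega), B 6 (by omega) (by omega), S 3 (by omega)]
    norm_num <;> omega
  · rw [S 0 (by omega), S 3 (by omega), S 4 (by omega)]; norm_num <;> omega
  · rw [S 1 (by omega), S 3 (by omega), S 5 (by omega)]; norm_num <;> omega
  · rw [S 3 (by omega), B 7 (by omega) (by omega), B 6 (by omega) (by omega)]
    norm_num <;> omega
  · rw [B (t + 2) (by omega) (by omega), B (t + 4) (by omega) (by omega),
      B (t + 3) (by omega) (by omega)]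
    norm_num <;> omega
  · rw [S 2 (by omega), B (2 * k + 2) (by omega) (by omega), B (2 * k + 3) (by omega) (by omega)]
    norm_num <;> omega

end St8
namespace St8
open MvPolynomial Finsupp

lemma mem_invariants {m n : ℕ} (w : Fin m → Fin n → ℤ) (p : MvPolynomial (Fin m) ℂ) :
    p ∈ invariants w ↔ ∀ d ∈ p.support, ∀ i : Fin n, ∑ v, (d v : ℤ) * w v i = 0 :=
  Iff.rfl

lemma OZ_mem (k : ℕ) (hk : 2 ≤ k) (Z : MvPolynomial (Fin (2 * k + 1 + 3)) ℂ)
    (D : Fin (2 * k + 1 + 3) →₀ ℕ) (hZ : Z = monomial D 1) (hD : Eqs k D) :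
    Z ∈ invariants (wD (2 * k + 1)) := by
  rw [mem_invariants]
  intro d hd i
  rw [hZ, support_monomial, if_neg one_ne_zero, Finset.mem_singleton] at hd
  subst hd
  exact (invariant_iff k hk d).mpr hD i

end St8

theorem statement8' (k : ℕ) (hk : 2 ≤ k) :
    invariants (wD (2 * k + 1))
      = Algebra.adjoin ℂ {OZ₁ k, OZ₂ k, OZ₃ k, OZ₄ k, OZ₅ k, OZ₆ k} := by
  open St8 in
  apply le_antisymm
  · intro p hp
    rw [St8.mem_invariants] at hp
    rw [p.as_sum]
    apply Subalgebra.sum_mem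
    intro d hd
    rw [show monomial d (coeff d p) = (coeff d p) • monomial d (1:ℂ) by
      rw [smul_monomial, smul_eq_mul, mul_one]]
    apply Subalgebra.smul_mem
    obtain ⟨c1, c2, c3, c4, c5, c6, hdec⟩ :=
      St8.decomp k hk d ((St8.invariant_iff k hk d).mp (hp d hd))
    rw [hdec]
    have key : ∀ s s' : Fin (2 * k + 1 + 3) →₀ ℕ,
        monomial (s + s') (1:ℂ) = monomial s 1 * monomial s' 1 := by
      intro s s'; rw [monomial_mul, one_mul]
    have keyp : ∀ (c : ℕ) (s : Fin (2 * k + 1 + 3) →₀ ℕ),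
        monomial (c • s) (1:ℂ) = (monomial s 1) ^ c := by
      intro c s; rw [monomial_pow, one_pow]
    rw [key, key, key, key, key, keyp, keyp, keyp, keyp, keyp, keyp,
      ← St8.OZ1_eq, ← St8.OZ2_eq, ← St8.OZ3_eq, ← St8.OZ4_eq, ← St8.OZ5_eq, ← St8.OZ6_eq]
    have m1 : OZ₁ k ∈ Algebra.adjoin ℂ {OZ₁ k, OZ₂ k, OZ₃ k, OZ₄ k, OZ₅ k, OZ₆ k} :=
      Algebra.subset_adjoin (by simp)
    have m2 : OZ₂ k ∈ Algebra.adjoin ℂ {OZ₁ k, OZ₂ k, OZ₃ k, OZ₄ k, OZ₅ k, OZ₆ k} :=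
      Algebra.subset_adjoin (by simp)
    have m3 : OZ₃ k ∈ Algebra.adjoin ℂ {OZ₁ k, OZ₂ k, OZ₃ k, OZ₄ k, OZ₅ k, OZ₆ k} :=
      Algebra.subset_adjoin (by simp)
    have m4 : OZ₄ k ∈ Algebra.adjoin ℂ {OZ₁ k, OZ₂ k, OZ₃ k, OZ₄ k, OZ₅ k, OZ₆ k} :=
      Algebra.subset_adjoin (by simp)
    have m5 : OZ₅ k ∈ Algebra.adjoin ℂ {OZ₁ k, OZ₂ k, OZ₃ k, OZ₄ k, OZ₅ k, OZ₆ k} :=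
      Algebra.subset_adjoin (by simp)
    have m6 : OZ₆ k ∈ Algebra.adjoin ℂ {OZ₁ k, OZ₂ k, OZ₃ k, OZ₄ k, OZ₅ k, OZ₆ k} :=
      Algebra.subset_adjoin (by simp)
    exact mul_mem (mul_mem (mul_mem (mul_mem (mul_mem (pow_mem m1 c1) (pow_mem m2 c2))
      (pow_mem m3 c3)) (pow_mem m4 c4)) (pow_mem m5 c5)) (pow_mem m6 c6)
  · apply Algebra.adjoin_le
    intro x hx
    simp only [Set.mem_insert_iff, Set.mem_singleton_iff] at hx
    rcases hx with rfl | rfl | rfl | rfl | rfl | rfl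
    · exact St8.OZ_mem k hk _ _ (St8.OZ1_eq k) (St8.Eqs_D1 k hk)
    · exact St8.OZ_mem k hk _ _ (St8.OZ2_eq k) (St8.Eqs_D2 k hk)
    · exact St8.OZ_mem k hk _ _ (St8.OZ3_eq k) (St8.Eqs_D3 k hk)
    · exact St8.OZ_mem k hk _ _ (St8.OZ4_eq k) (St8.Eqs_D4 k hk)
    · exact St8.OZ_mem k hk _ _ (St8.OZ5_eq k) (St8.Eqs_D5 k hk)
    · exact St8.OZ_mem k hk _ _ (St8.OZ6_eq k) (St8.Eqs_D6 k hk)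
/-- for `n = 2k+1` (`k ≥ 2`), the ring of invariants of the torus action
on `S = ℂ[x₁, x₂, x_{2k}, y₀, …, y_{2k}]` is generated, as a `ℂ`-subalgebra, by the
six monomials `Z₁, …, Z₆`. -/
theorem statement8 (k : ℕ) (hk : 2 ≤ k) :
    invariants (wD (2 * k + 1))
      = Algebra.adjoin ℂ {OZ₁ k, OZ₂ k, OZ₃ k, OZ₄ k, OZ₅ k, OZ₆ k} := by
  exact statement8' k hk
end
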